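/- arXiv:0901.0195 — 3 statements merged into one kernel-verified Lean document; each statement's English description precedes it below -/
import Mathlib

section
/- Let T be a positive trace-class operator on a separable Hilbert space H with eigenvalues λ₁ ≥ λ₂ ≥ ... (with multiplicity, orthonormal eigenbasis (φ_k)). Then for every orthonormal basis (ψ_k) of H and every n ≥ 1, ∑_{k=1}^n ⟨ψ_k, Tψ_k⟩ ≤ ∑_{k=1}^n λ_k. -/
open scoped ComplexConjugate

/-- Combinatorial core of Arveson–Kadison majorization. -/
private lemma ak_key (lam c : ℕ → ℝ) (hmono : Antitone lam) (hnn : ∀ k, 0 ≤ lam k)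
    (hc0 : ∀ j, 0 ≤ c j) (hc1 : ∀ j, c j ≤ 1)
    (n : ℕ) (hcn : ∀ m : ℕ, ∑ j ∈ Finset.range m, c j ≤ (n : ℝ))
    (hslc : Summable (fun j => lam j * c j)) :
    ∑' j, lam j * c j ≤ ∑ j ∈ Finset.range n, lam j := by
  have hsc : Summable c := summable_of_sum_range_le hc0 hcn
  have htc : ∑' j, c j ≤ (n : ℝ) := Real.tsum_le_of_sum_range_le hc0 hcn
  have h1 : ∑ j ∈ Finset.range n, (lam j * c j) + ∑' j, lam (j + n) * c (j + n)
      = ∑' j, lam j * c j := Summable.sum_add_tsum_nat_add n hslc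
  have h2 : ∑ j ∈ Finset.range n, c j + ∑' j, c (j + n) = ∑' j, c j :=
    Summable.sum_add_tsum_nat_add n hsc
  have hsl' : Summable (fun j => lam (j + n) * c (j + n)) :=
    (summable_nat_add_iff n).2 hslc
  have hsc' : Summable (fun j => c (j + n)) := (summable_nat_add_iff n).2 hsc
  have h3 : ∑' j, lam (j + n) * c (j + n) ≤ lam n * ∑' j, c (j + n) := by
    rw [← tsum_mul_left]
    exact Summable.tsum_le_tsum
      (fun j => mul_le_mul_of_nonneg_right (hmono (Nat.le_add_left n j)) (hc0 _))
      hsl' (hsc'.mul_left _)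
  have h4 : ∑' j, c (j + n) ≤ (n : ℝ) - ∑ j ∈ Finset.range n, c j := by linarith
  have h5 : lam n * ∑' j, c (j + n) ≤ lam n * ((n : ℝ) - ∑ j ∈ Finset.range n, c j) :=
    mul_le_mul_of_nonneg_left h4 (hnn n)
  have hn : ((n : ℝ) - ∑ j ∈ Finset.range n, c j) = ∑ j ∈ Finset.range n, (1 - c j) := by
    rw [Finset.sum_sub_distrib]
    simp
  have h6 : ∑ j ∈ Finset.range n, (lam j * c j) +
      lam n * ((n : ℝ) - ∑ j ∈ Finset.range n, c j) ≤ ∑ j ∈ Finset.range n, lam j := by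
    rw [hn, Finset.mul_sum, ← Finset.sum_add_distrib]
    refine Finset.sum_le_sum fun j hj => ?_
    have hjn : lam n ≤ lam j := hmono (le_of_lt (Finset.mem_range.mp hj))
    nlinarith [hc0 j, hc1 j, hnn j]
  linarith

/-- Arveson–Kadison majorization: for a positive trace-class operator `T` with
eigenvalues `λ₁ ≥ λ₂ ≥ ...` (with multiplicity, orthonormal eigenbasis `φ`),
every orthonormal basis `ψ` satisfies `∑_{k<n} ⟨ψ_k, Tψ_k⟩ ≤ ∑_{k<n} λ_k`. -/
theorem arveson_kadison_majorization
    {H : Type*} [NormedAddCommGroup H] [InnerProductSpace ℂ H] [CompleteSpace H]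
    (T : H →L[ℂ] H) (hTsa : IsSelfAdjoint T)
    (hTpos : ∀ x : H, 0 ≤ ((inner ℂ x (T x) : ℂ)).re)
    (lam : ℕ → ℝ) (hmono : Antitone lam) (hnonneg : ∀ k, 0 ≤ lam k)
    (htrace : Summable lam)
    (φ : HilbertBasis ℕ ℂ H)
    (heig : ∀ k, T (φ k) = (lam k : ℂ) • φ k) :
    ∀ (ψ : HilbertBasis ℕ ℂ H) (n : ℕ),
      ∑ k ∈ Finset.range n, ((inner ℂ (ψ k) (T (ψ k)) : ℂ)).re
        ≤ ∑ k ∈ Finset.range n, lam k := by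
  intro ψ n
  have hsym : ∀ x y : H, (inner ℂ (T x) y : ℂ) = inner ℂ x (T y) :=
    ContinuousLinearMap.isSelfAdjoint_iff_isSymmetric.mp hTsa
  -- expansion of the quadratic form in the eigenbasis
  have hexp : ∀ x : H,
      HasSum (fun j => lam j * ‖(inner ℂ (φ j) x : ℂ)‖ ^ 2) ((inner ℂ x (T x) : ℂ)).re := by
    intro x
    have h := φ.hasSum_inner_mul_inner x (T x)
    have heq : ∀ j, (inner ℂ x (φ j) * inner ℂ (φ j) (T x) : ℂ)
        = ((lam j * ‖(inner ℂ (φ j) x : ℂ)‖ ^ 2 : ℝ) : ℂ) := by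
      intro j
      have h1 : (inner ℂ (φ j) (T x) : ℂ) = (lam j : ℂ) * inner ℂ (φ j) x := by
        rw [← hsym, heig j, inner_smul_left]
        simp [Complex.conj_ofReal]
      have h2 : (inner ℂ x (φ j) : ℂ) = conj (inner ℂ (φ j) x : ℂ) :=
        (inner_conj_symm _ _).symm
      rw [h1, h2]
      rw [show conj (inner ℂ (φ j) x : ℂ) * ((lam j : ℂ) * inner ℂ (φ j) x)
            = (lam j : ℂ) * (inner ℂ (φ j) x * conj (inner ℂ (φ j) x)) by ring,
        Complex.mul_conj]
      rw [Complex.normSq_eq_norm_sq]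
      push_cast
      ring
    have h' := h.mapL Complex.reCLM
    have hfun : (fun j => lam j * ‖(inner ℂ (φ j) x : ℂ)‖ ^ 2)
        = fun j => Complex.reCLM ((inner ℂ x (φ j) * inner ℂ (φ j) (T x) : ℂ)) := by
      funext j; rw [heq j]; simp only [Complex.reCLM_apply, Complex.ofReal_re]
    rw [hfun]; exact h'
  have hsumx : ∀ x : H, Summable (fun j => lam j * ‖(inner ℂ (φ j) x : ℂ)‖ ^ 2) :=
    fun x => (hexp x).summable
  set c : ℕ → ℝ := fun j => ∑ k ∈ Finset.range n, ‖(inner ℂ (φ j) (ψ k) : ℂ)‖ ^ 2 with hcdef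
  have hswap : ∑ k ∈ Finset.range n, ((inner ℂ (ψ k) (T (ψ k)) : ℂ)).re
      = ∑' j, lam j * c j := by
    calc ∑ k ∈ Finset.range n, ((inner ℂ (ψ k) (T (ψ k)) : ℂ)).re
        = ∑ k ∈ Finset.range n, ∑' j, lam j * ‖(inner ℂ (φ j) (ψ k) : ℂ)‖ ^ 2 :=
          Finset.sum_congr rfl (fun k _ => ((hexp (ψ k)).tsum_eq).symm)
      _ = ∑' j, ∑ k ∈ Finset.range n, lam j * ‖(inner ℂ (φ j) (ψ k) : ℂ)‖ ^ 2 :=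
          (Summable.tsum_finsetSum (fun k _ => hsumx (ψ k))).symm
      _ = ∑' j, lam j * c j := by
          simp only [hcdef, Finset.mul_sum]
  rw [hswap]
  have hφnorm : ∀ j, ‖φ j‖ = 1 := fun j => φ.orthonormal.1 j
  have hψnorm : ∀ k, ‖ψ k‖ = 1 := fun k => ψ.orthonormal.1 k
  have hc0 : ∀ j, 0 ≤ c j := fun j =>
    Finset.sum_nonneg fun k _ => by positivity
  have hc1 : ∀ j, c j ≤ 1 := by
    intro j
    have hb := ψ.orthonormal.tsum_inner_products_le (φ j)
    have hs := ψ.orthonormal.inner_products_summable (x := φ j)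
    have hle : ∑ k ∈ Finset.range n, ‖(inner ℂ (ψ k) (φ j) : ℂ)‖ ^ 2
        ≤ ∑' k, ‖(inner ℂ (ψ k) (φ j) : ℂ)‖ ^ 2 :=
      Summable.sum_le_tsum _ (fun k _ => by positivity) hs
    have : c j = ∑ k ∈ Finset.range n, ‖(inner ℂ (ψ k) (φ j) : ℂ)‖ ^ 2 := by
      simp only [hcdef]
      exact Finset.sum_congr rfl fun k _ => by rw [norm_inner_symm]
    rw [this]
    calc ∑ k ∈ Finset.range n, ‖(inner ℂ (ψ k) (φ j) : ℂ)‖ ^ 2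
        ≤ ∑' k, ‖(inner ℂ (ψ k) (φ j) : ℂ)‖ ^ 2 := hle
      _ ≤ ‖φ j‖ ^ 2 := hb
      _ = 1 := by rw [hφnorm]; norm_num
  have hcn : ∀ m : ℕ, ∑ j ∈ Finset.range m, c j ≤ (n : ℝ) := by
    intro m
    have : ∑ j ∈ Finset.range m, c j
        = ∑ k ∈ Finset.range n, ∑ j ∈ Finset.range m, ‖(inner ℂ (φ j) (ψ k) : ℂ)‖ ^ 2 :=
      Finset.sum_comm
    rw [this]
    calc ∑ k ∈ Finset.range n, ∑ j ∈ Finset.range m, ‖(inner ℂ (φ j) (ψ k) : ℂ)‖ ^ 2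
        ≤ ∑ k ∈ Finset.range n, (1 : ℝ) := by
          refine Finset.sum_le_sum fun k _ => ?_
          have := φ.orthonormal.sum_inner_products_le (s := Finset.range m) (ψ k)
          calc ∑ j ∈ Finset.range m, ‖(inner ℂ (φ j) (ψ k) : ℂ)‖ ^ 2 ≤ ‖ψ k‖ ^ 2 := this
            _ = 1 := by rw [hψnorm]; norm_num
      _ = (n : ℝ) := by simp
  have hslc : Summable (fun j => lam j * c j) := by
    have : (fun j => lam j * c j)
        = fun j => ∑ k ∈ Finset.range n, lam j * ‖(inner ℂ (φ j) (ψ k) : ℂ)‖ ^ 2 := by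
      funext j; simp only [hcdef, Finset.mul_sum]
    rw [this]
    exact summable_sum fun k _ => hsumx (ψ k)
  exact ak_key lam c hmono hnonneg hc0 hc1 n hcn hslc
end

section
/- (Mercer expansion) Under the hypotheses of Mercer's theorem, K(s,t) = ∑_{k=1}^∞ λ_k φ_k(s) φ_k(t), where (φ_k) are continuous orthonormal eigenfunctions of T with eigenvalues λ_k, and the series converges absolutely and uniformly on J × J. -/
open MeasureTheory

open MeasureTheory Set Filter

noncomputable def mcIdx (a b : ℝ) (n : ℕ) (s : ℝ) : ℕ := min (n-1) ⌊(s-a)*n/(b-a)⌋₊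
noncomputable def mcPt (a b : ℝ) (n : ℕ) (i : ℕ) : ℝ := a + (b-a)*i/n

lemma mcIdx_lt (a b : ℝ) {n : ℕ} (hn : 0 < n) (s : ℝ) : mcIdx a b n s < n :=
  lt_of_le_of_lt (min_le_left _ _) (Nat.sub_lt hn one_pos)

lemma mcPt_mem {a b : ℝ} (hab : a ≤ b) {n : ℕ} (hn : 0 < n) {i : ℕ} (hi : i ≤ n) :
    mcPt a b n i ∈ Icc a b := by
  have hn' : (0:ℝ) < n := by exact_mod_cast hn
  have hi' : (i:ℝ) ≤ n := by exact_mod_cast hi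
  constructor
  · have h0 : 0 ≤ (b-a)*i/n :=
      div_nonneg (mul_nonneg (by linarith) (Nat.cast_nonneg i)) hn'.le
    simp only [mcPt]; linarith
  · simp only [mcPt]
    have h2 : (b-a)*i/n ≤ b - a := by
      rw [div_le_iff₀ hn']
      nlinarith [mul_le_mul_of_nonneg_left hi' (by linarith : (0:ℝ) ≤ b - a)]
    linarith

lemma mcIdx_dist {a b : ℝ} (hab : a < b) {n : ℕ} (hn : 0 < n) {s : ℝ} (hs : s ∈ Ico a b) :
    |mcPt a b n (mcIdx a b n s) - s| ≤ (b-a)/n := by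
  have hba : (0:ℝ) < b - a := by linarith
  have hn' : (0:ℝ) < n := by exact_mod_cast hn
  set r := (s-a)*n/(b-a) with hr
  have hr0 : 0 ≤ r := div_nonneg (mul_nonneg (by linarith [hs.1]) n.cast_nonneg) hba.le
  have hrn : r < n := by
    rw [hr, div_lt_iff₀ hba]
    nlinarith [hs.2]
  have hfl : (⌊r⌋₊ : ℝ) ≤ r := Nat.floor_le hr0
  have hfl2 : r < ⌊r⌋₊ + 1 := Nat.lt_floor_add_one r
  have hfln : ⌊r⌋₊ < n := (Nat.floor_lt hr0).mpr hrn
  have hmin : mcIdx a b n s = ⌊r⌋₊ := min_eq_right (Nat.le_sub_one_of_lt hfln)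
  have hs' : (b-a)*r/n = s - a := by
    rw [hr]; field_simp
  have h1 : mcPt a b n (mcIdx a b n s) - s = (b-a)/n*((⌊r⌋₊:ℝ) - r) := by
    simp only [mcPt, hmin]
    have : s = a + (b-a)*r/n := by rw [hs']; ring
    rw [this]; ring
  rw [h1, abs_le]
  have hq : 0 < (b-a)/n := div_pos hba hn'
  constructor <;> nlinarith

lemma mcIdx_measurableSet (a b : ℝ) (n i : ℕ) :
    MeasurableSet (mcIdx a b n ⁻¹' {i}) := by
  have hfl : Measurable fun s : ℝ => ⌊(s-a)*n/(b-a)⌋₊ :=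
    Measurable.nat_floor (by fun_prop)
  have : mcIdx a b n ⁻¹' {i} = (fun s : ℝ => ⌊(s-a)*n/(b-a)⌋₊) ⁻¹' {k | min (n-1) k = i} := by
    rfl
  rw [this]
  exact hfl (MeasurableSet.of_discrete)

lemma step_repr (a b : ℝ) {n : ℕ} (hn : 0 < n) (F g : ℝ → ℝ) (s : ℝ) :
    F (mcPt a b n (mcIdx a b n s)) * g s
      = ∑ i ∈ Finset.range n,
          (mcIdx a b n ⁻¹' {i}).indicator (fun u => F (mcPt a b n i) * g u) s := by
  rw [Finset.sum_eq_single (mcIdx a b n s)]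
  · rw [Set.indicator_of_mem (by exact rfl : s ∈ mcIdx a b n ⁻¹' {mcIdx a b n s})]
  · intro i _ hne
    refine Set.indicator_of_notMem (fun h => hne ?_) _
    have : mcIdx a b n s = i := Set.mem_preimage.mp h
    exact this.symm
  · intro h
    exact absurd (Finset.mem_range.mpr (mcIdx_lt a b hn s)) h

lemma step_comp_integrable (a b : ℝ) {n : ℕ} (hn : 0 < n) (F g : ℝ → ℝ)
    (hg : IntegrableOn g (Ico a b)) :
    IntegrableOn (fun s => F (mcPt a b n (mcIdx a b n s)) * g s) (Ico a b) := by
  have : (fun s => F (mcPt a b n (mcIdx a b n s)) * g s)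
      = fun s => ∑ i ∈ Finset.range n,
          (mcIdx a b n ⁻¹' {i}).indicator (fun u => F (mcPt a b n i) * g u) s := by
    funext s; exact step_repr a b hn F g s
  rw [this]
  apply integrable_finset_sum
  intro i _
  exact (hg.const_mul _).indicator (mcIdx_measurableSet a b n i)

lemma step_integral (a b : ℝ) {n : ℕ} (hn : 0 < n) (F g : ℝ → ℝ)
    (hg : IntegrableOn g (Ico a b)) :
    ∫ s in Ico a b, F (mcPt a b n (mcIdx a b n s)) * g s
      = ∑ i ∈ Finset.range n,
          F (mcPt a b n i) * ∫ s in (mcIdx a b n ⁻¹' {i}) ∩ Ico a b, g s := by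
  have h1 : ∫ s in Ico a b, F (mcPt a b n (mcIdx a b n s)) * g s
      = ∫ s in Ico a b, ∑ i ∈ Finset.range n,
          (mcIdx a b n ⁻¹' {i}).indicator (fun u => F (mcPt a b n i) * g u) s := by
    congr 1; funext s; exact step_repr a b hn F g s
  rw [h1, integral_finset_sum]
  · apply Finset.sum_congr rfl
    intro i _
    rw [integral_indicator (mcIdx_measurableSet a b n i)]
    rw [Measure.restrict_restrict (mcIdx_measurableSet a b n i)]
    exact integral_const_mul _ _
  · intro i _
    exact (hg.const_mul _).indicator (mcIdx_measurableSet a b n i)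

lemma integrableOn_of_bdd {g : ℝ → ℝ} {s : Set ℝ} (hs : MeasurableSet s)
    (hμ : volume s < ⊤) (hm : AEStronglyMeasurable g (volume.restrict s)) {C : ℝ}
    (hb : ∀ x ∈ s, |g x| ≤ C) : IntegrableOn g s := by
  refine Integrable.mono' (g := fun _ => C) ?_ hm
    (ae_restrict_of_forall_mem hs (fun x hx => by rw [Real.norm_eq_abs]; exact hb x hx))
  exact integrableOn_const hμ.ne


lemma double_pos (a b : ℝ) (hab : a < b) (K : ℝ → ℝ → ℝ)
    (hKcont : ContinuousOn (fun p : ℝ × ℝ => K p.1 p.2) (Icc a b ×ˢ Icc a b))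
    (hKpsd : ∀ (n : ℕ) (t : Fin n → ℝ) (c : Fin n → ℝ), (∀ i, t i ∈ Icc a b) →
      0 ≤ ∑ i, ∑ j, c i * c j * K (t i) (t j))
    (g : ℝ → ℝ) (hgm : AEStronglyMeasurable g (volume.restrict (Icc a b)))
    (C : ℝ) (hgb : ∀ s ∈ Icc a b, |g s| ≤ C) :
    0 ≤ ∫ s in Icc a b, (∫ t in Icc a b, K s t * g t) * g s := by
  have hba : (0:ℝ) < b - a := by linarith
  have hC0 : 0 ≤ C := le_trans (abs_nonneg _) (hgb a (left_mem_Icc.mpr hab.le))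
  have hIccFin : volume (Icc a b) < ⊤ := by
    rw [Real.volume_Icc]; exact ENNReal.ofReal_lt_top
  have hIcoFin : volume (Ico a b) < ⊤ := by
    rw [Real.volume_Ico]; exact ENNReal.ofReal_lt_top
  have hIcoVol : (volume (Ico a b)).toReal = b - a := by
    rw [Real.volume_Ico, ENNReal.toReal_ofReal hba.le]
  have hIcoIcc : volume.restrict (Ico a b) = volume.restrict (Icc a b) :=
    Measure.restrict_congr_set Ico_ae_eq_Icc
  have hgInt : IntegrableOn g (Icc a b) := integrableOn_of_bdd measurableSet_Icc hIccFin hgm hgb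
  have hgIntIco : IntegrableOn g (Ico a b) := hgInt.mono_set Ico_subset_Icc_self
  obtain ⟨M, hM⟩ := (isCompact_Icc.prod isCompact_Icc).exists_bound_of_continuousOn hKcont
  have hM' : ∀ s ∈ Icc a b, ∀ t ∈ Icc a b, |K s t| ≤ M := by
    intro s hs t ht; exact hM (s, t) ⟨hs, ht⟩
  have hM0 : 0 ≤ M :=
    le_trans (abs_nonneg _) (hM' a (left_mem_Icc.mpr hab.le) a (left_mem_Icc.mpr hab.le))
  have hKsec : ∀ s ∈ Icc a b, ContinuousOn (fun t => K s t) (Icc a b) := by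
    intro s hs
    exact hKcont.comp (Continuous.continuousOn (Continuous.prodMk_right s)) (fun t ht => ⟨hs, ht⟩)
  have hKsecInt : ∀ s ∈ Icc a b, IntegrableOn (fun t => K s t * g t) (Ico a b) := by
    intro s hs
    refine IntegrableOn.mono_set ?_ Ico_subset_Icc_self
    refine integrableOn_of_bdd measurableSet_Icc hIccFin
      (((hKsec s hs).aestronglyMeasurable measurableSet_Icc).mul hgm) (C := M * C) ?_
    intro t ht
    rw [abs_mul]
    exact mul_le_mul (hM' s hs t ht) (hgb t ht) (abs_nonneg _) hM0
  have hprod : AEStronglyMeasurable (fun p : ℝ × ℝ => K p.1 p.2 * g p.2)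
      ((volume.restrict (Icc a b)).prod (volume.restrict (Icc a b))) := by
    apply AEStronglyMeasurable.mul
    · rw [Measure.prod_restrict]
      exact hKcont.aestronglyMeasurable (measurableSet_Icc.prod measurableSet_Icc)
    · exact hgm.comp_snd
  have hinner_aesm : AEStronglyMeasurable (fun s => ∫ t in Icc a b, K s t * g t)
      (volume.restrict (Icc a b)) := hprod.integral_prod_right'
  have hinner_bd : ∀ s ∈ Icc a b, |∫ t in Icc a b, K s t * g t| ≤ M * C * (b - a) := by
    intro s hs
    have h1 : ∀ t ∈ Icc a b, ‖K s t * g t‖ ≤ M * C := by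
      intro t ht
      rw [Real.norm_eq_abs, abs_mul]
      exact mul_le_mul (hM' s hs t ht) (hgb t ht) (abs_nonneg _) hM0
    have h2 : IntegrableOn (fun t => K s t * g t) (Icc a b) := by
      refine integrableOn_of_bdd measurableSet_Icc hIccFin ?_ (fun t ht => by
        rw [← Real.norm_eq_abs]; exact h1 t ht)
      exact ((hKsec s hs).aestronglyMeasurable measurableSet_Icc).mul hgm
    calc |∫ t in Icc a b, K s t * g t| ≤ (M * C) * (volume (Icc a b)).toReal :=
          norm_setIntegral_le_of_norm_le_const hIccFin h1
      _ = M * C * (b - a) := by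
          rw [Real.volume_Icc, ENNReal.toReal_ofReal hba.le]
  have houter_int : IntegrableOn (fun s => (∫ t in Icc a b, K s t * g t) * g s) (Icc a b) := by
    refine integrableOn_of_bdd measurableSet_Icc hIccFin (hinner_aesm.mul hgm)
      (C := M * C * (b - a) * C) ?_
    intro s hs
    rw [abs_mul]
    refine mul_le_mul (hinner_bd s hs) (hgb s hs) (abs_nonneg _) ?_
    positivity
  set A := ∫ s in Icc a b, (∫ t in Icc a b, K s t * g t) * g s with hA
  set D : ℝ := C * C * (b - a) * (b - a) + 1 with hDdef
  have hD0 : 0 < D := by nlinarith [sq_nonneg (C * (b - a))]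
  suffices hall : ∀ ε > 0, -A ≤ ε * D by
    by_contra hAneg
    push_neg at hAneg
    have h := hall ((-A) / (2 * D)) (div_pos (by linarith) (by linarith))
    have he : (-A) / (2 * D) * D = -A / 2 := by field_simp
    rw [he] at h
    linarith
  intro ε hε
  have hUC : UniformContinuousOn (fun p : ℝ × ℝ => K p.1 p.2) (Icc a b ×ˢ Icc a b) :=
    (isCompact_Icc.prod isCompact_Icc).uniformContinuousOn_of_continuous hKcont
  rw [Metric.uniformContinuousOn_iff] at hUC
  obtain ⟨δ, hδ, hKu⟩ := hUC ε hε
  obtain ⟨n, hnn⟩ := exists_nat_gt (max 1 ((b - a) / δ))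
  have hn1R : (1:ℝ) < n := lt_of_le_of_lt (le_max_left _ _) hnn
  have hn1 : 0 < n := by exact_mod_cast lt_trans zero_lt_one hn1R
  have hnR : (0:ℝ) < n := by exact_mod_cast hn1
  have hmesh : (b - a) / n < δ := by
    rw [div_lt_iff₀ hnR]
    have h3 : (b - a) / δ < n := lt_of_le_of_lt (le_max_right _ _) hnn
    rw [div_lt_iff₀ hδ] at h3
    linarith
  set ξ : ℝ → ℝ := fun s => mcPt a b n (mcIdx a b n s) with hξ
  set cc : ℕ → ℝ := fun i => ∫ s in (mcIdx a b n ⁻¹' {i}) ∩ Ico a b, g s with hcc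
  have hξmem : ∀ s, ξ s ∈ Icc a b := fun s => mcPt_mem hab.le hn1 (mcIdx_lt a b hn1 s).le
  have hξdist : ∀ s ∈ Ico a b, |ξ s - s| ≤ (b - a) / n := fun s hs => mcIdx_dist hab hn1 hs
  have hKclose : ∀ s ∈ Ico a b, ∀ t ∈ Ico a b, |K s t - K (ξ s) (ξ t)| ≤ ε := by
    intro s hs t ht
    have hd : dist ((s, t) : ℝ × ℝ) ((ξ s, ξ t) : ℝ × ℝ) < δ := by
      rw [Prod.dist_eq]
      apply max_lt <;> rw [Real.dist_eq]
      · calc |s - ξ s| = |ξ s - s| := abs_sub_comm _ _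
          _ ≤ (b - a)/n := hξdist s hs
          _ < δ := hmesh
      · calc |t - ξ t| = |ξ t - t| := abs_sub_comm _ _
          _ ≤ (b - a)/n := hξdist t ht
          _ < δ := hmesh
    have h5 := hKu (s, t) ⟨Ico_subset_Icc_self hs, Ico_subset_Icc_self ht⟩
      (ξ s, ξ t) ⟨hξmem s, hξmem t⟩ hd
    rw [Real.dist_eq] at h5
    exact h5.le
  have hpsd := hKpsd n (fun i => mcPt a b n (i : ℕ)) (fun i => cc (i : ℕ))
    (fun i => mcPt_mem hab.le hn1 i.isLt.le)
  -- Claim 1 : discretized double integral equals the discrete sum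
  have claim1 : ∫ s in Ico a b, (∫ t in Ico a b, K (ξ s) (ξ t) * g t) * g s
      = ∑ i : Fin n, ∑ j : Fin n,
          cc (i:ℕ) * cc (j:ℕ) * K (mcPt a b n (i:ℕ)) (mcPt a b n (j:ℕ)) := by
    have hinner : ∀ s : ℝ, (∫ t in Ico a b, K (ξ s) (ξ t) * g t)
        = ∑ j ∈ Finset.range n, K (ξ s) (mcPt a b n j) * cc j := fun s =>
      step_integral a b hn1 (fun u => K (ξ s) u) g hgIntIco
    have hfun : (fun s => (∫ t in Ico a b, K (ξ s) (ξ t) * g t) * g s)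
        = fun s => (fun u => ∑ j ∈ Finset.range n, K u (mcPt a b n j) * cc j)
            (mcPt a b n (mcIdx a b n s)) * g s := by
      funext s; rw [hinner s, hξ]
    have hstep := step_integral a b hn1
      (fun u => ∑ j ∈ Finset.range n, K u (mcPt a b n j) * cc j) g hgIntIco
    rw [hfun, hstep,
      Fin.sum_univ_eq_sum_range (fun i => ∑ j : Fin n,
        cc i * cc (j:ℕ) * K (mcPt a b n i) (mcPt a b n (j:ℕ)))]
    apply Finset.sum_congr rfl
    intro i _
    rw [Fin.sum_univ_eq_sum_range (fun j => cc i * cc j * K (mcPt a b n i) (mcPt a b n j)),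
      Finset.sum_mul]
    apply Finset.sum_congr rfl
    intro j _
    ring
  have hdis_inner_int : ∀ s : ℝ, IntegrableOn (fun t => K (ξ s) (ξ t) * g t) (Ico a b) :=
    fun s => step_comp_integrable a b hn1 (fun u => K (ξ s) u) g hgIntIco
  have hdis_outer_int : IntegrableOn
      (fun s => (∫ t in Ico a b, K (ξ s) (ξ t) * g t) * g s) (Ico a b) := by
    have hfun : (fun s => (∫ t in Ico a b, K (ξ s) (ξ t) * g t) * g s)
        = fun s => (fun u => ∑ j ∈ Finset.range n, K u (mcPt a b n j) * cc j)
            (mcPt a b n (mcIdx a b n s)) * g s := by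
      funext s
      rw [step_integral a b hn1 (fun u => K (ξ s) u) g hgIntIco, hξ]
    rw [hfun]
    exact step_comp_integrable a b hn1
      (fun u => ∑ j ∈ Finset.range n, K u (mcPt a b n j) * cc j) g hgIntIco
  -- rewrite A with Ico
  have hA' : A = ∫ s in Ico a b, (∫ t in Ico a b, K s t * g t) * g s := by
    rw [hA]
    have h6 : ∀ s : ℝ, (∫ t in Icc a b, K s t * g t) = ∫ t in Ico a b, K s t * g t :=
      fun s => integral_Icc_eq_integral_Ico
    simp only [h6]
    exact integral_Icc_eq_integral_Ico
  have hf1Int : IntegrableOn (fun s => (∫ t in Ico a b, K s t * g t) * g s) (Ico a b) := by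
    have h6 : (fun s => (∫ t in Ico a b, K s t * g t) * g s)
        = fun s => (∫ t in Icc a b, K s t * g t) * g s := by
      funext s; rw [integral_Icc_eq_integral_Ico]
    rw [h6]
    unfold IntegrableOn
    rw [hIcoIcc]
    exact houter_int
  -- pointwise bound on the difference of inner integrals
  have hinnerdiff : ∀ s ∈ Ico a b,
      |(∫ t in Ico a b, K s t * g t) - ∫ t in Ico a b, K (ξ s) (ξ t) * g t|
        ≤ ε * C * (b - a) := by
    intro s hs
    have hsub : (∫ t in Ico a b, K s t * g t) - (∫ t in Ico a b, K (ξ s) (ξ t) * g t)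
        = ∫ t in Ico a b, (K s t * g t - K (ξ s) (ξ t) * g t) :=
      (integral_sub (hKsecInt s (Ico_subset_Icc_self hs)) (hdis_inner_int s)).symm
    rw [hsub]
    have hbd : ∀ t ∈ Ico a b, ‖K s t * g t - K (ξ s) (ξ t) * g t‖ ≤ ε * C := by
      intro t ht
      rw [Real.norm_eq_abs]
      have : K s t * g t - K (ξ s) (ξ t) * g t = (K s t - K (ξ s) (ξ t)) * g t := by ring
      rw [this, abs_mul]
      exact mul_le_mul (hKclose s hs t ht) (hgb t (Ico_subset_Icc_self ht))
        (abs_nonneg _) hε.le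
    calc |∫ t in Ico a b, (K s t * g t - K (ξ s) (ξ t) * g t)|
        ≤ (ε * C) * (volume (Ico a b)).toReal :=
          norm_setIntegral_le_of_norm_le_const hIcoFin hbd
      _ = ε * C * (b - a) := by rw [hIcoVol]
  -- total error bound
  have hdiff : |A - ∫ s in Ico a b, (∫ t in Ico a b, K (ξ s) (ξ t) * g t) * g s|
      ≤ ε * C * (b - a) * C * (b - a) := by
    rw [hA', ← integral_sub hf1Int hdis_outer_int]
    have hbd : ∀ s ∈ Ico a b,
        ‖(∫ t in Ico a b, K s t * g t) * g s
          - (∫ t in Ico a b, K (ξ s) (ξ t) * g t) * g s‖ ≤ ε * C * (b - a) * C := by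
      intro s hs
      rw [Real.norm_eq_abs]
      have h7 : (∫ t in Ico a b, K s t * g t) * g s
          - (∫ t in Ico a b, K (ξ s) (ξ t) * g t) * g s
          = ((∫ t in Ico a b, K s t * g t) - ∫ t in Ico a b, K (ξ s) (ξ t) * g t) * g s := by
        ring
      rw [h7, abs_mul]
      refine mul_le_mul (hinnerdiff s hs) (hgb s (Ico_subset_Icc_self hs)) (abs_nonneg _) ?_
      positivity
    calc |∫ s in Ico a b, ((∫ t in Ico a b, K s t * g t) * g s
            - (∫ t in Ico a b, K (ξ s) (ξ t) * g t) * g s)|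
        ≤ (ε * C * (b - a) * C) * (volume (Ico a b)).toReal :=
          norm_setIntegral_le_of_norm_le_const hIcoFin hbd
      _ = ε * C * (b - a) * C * (b - a) := by rw [hIcoVol]
  -- conclude
  have hpos : 0 ≤ ∫ s in Ico a b, (∫ t in Ico a b, K (ξ s) (ξ t) * g t) * g s := by
    rw [claim1]; exact hpsd
  have habs := abs_le.mp hdiff
  have : ε * C * (b - a) * C * (b - a) ≤ ε * D := by
    rw [hDdef]
    nlinarith [sq_nonneg (C * (b - a))]
  linarith [habs.1, habs.2]

lemma fubini_sym (a b : ℝ) (hab : a < b) (K : ℝ → ℝ → ℝ)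
    (hKcont : ContinuousOn (fun p : ℝ × ℝ => K p.1 p.2) (Icc a b ×ˢ Icc a b))
    (hKsymm : ∀ s ∈ Icc a b, ∀ t ∈ Icc a b, K s t = K t s)
    (lam : ℕ → ℝ) (φ : ℕ → ℝ → ℝ) (k : ℕ)
    (hφk : ContinuousOn (φ k) (Icc a b))
    (heigk : ∀ t ∈ Icc a b, (∫ s in Icc a b, K t s * φ k s) = lam k * φ k t)
    (g : ℝ → ℝ) (hgm : AEStronglyMeasurable g (volume.restrict (Icc a b)))
    (C : ℝ) (hgb : ∀ s ∈ Icc a b, |g s| ≤ C) :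
    ∫ s in Icc a b, (∫ t in Icc a b, K s t * g t) * φ k s
      = lam k * ∫ t in Icc a b, g t * φ k t := by
  have hba : (0:ℝ) < b - a := by linarith
  have hC0 : 0 ≤ C := le_trans (abs_nonneg _) (hgb a (left_mem_Icc.mpr hab.le))
  have hIccFin : volume (Icc a b) < ⊤ := by
    rw [Real.volume_Icc]; exact ENNReal.ofReal_lt_top
  haveI hfin : IsFiniteMeasure (volume.restrict (Icc a b)) :=
    ⟨by rw [Measure.restrict_apply_univ]; exact hIccFin⟩
  obtain ⟨M, hM⟩ := (isCompact_Icc.prod isCompact_Icc).exists_bound_of_continuousOn hKcont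
  have hM' : ∀ s ∈ Icc a b, ∀ t ∈ Icc a b, |K s t| ≤ M := by
    intro s hs t ht; exact hM (s, t) ⟨hs, ht⟩
  have hM0 : 0 ≤ M :=
    le_trans (abs_nonneg _) (hM' a (left_mem_Icc.mpr hab.le) a (left_mem_Icc.mpr hab.le))
  obtain ⟨Cφ, hCφ⟩ := isCompact_Icc.exists_bound_of_continuousOn hφk
  have hCφ0 : 0 ≤ Cφ := le_trans (norm_nonneg _) (hCφ a (left_mem_Icc.mpr hab.le))
  -- the function on the product
  set F : ℝ × ℝ → ℝ := fun p => K p.1 p.2 * g p.2 * φ k p.1 with hF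
  have hFm : AEStronglyMeasurable F
      ((volume.restrict (Icc a b)).prod (volume.restrict (Icc a b))) := by
    apply AEStronglyMeasurable.mul
    apply AEStronglyMeasurable.mul
    · rw [Measure.prod_restrict]
      exact hKcont.aestronglyMeasurable (measurableSet_Icc.prod measurableSet_Icc)
    · exact hgm.comp_snd
    · exact ((hφk.aestronglyMeasurable measurableSet_Icc)).comp_fst
  have hFint : Integrable F ((volume.restrict (Icc a b)).prod (volume.restrict (Icc a b))) := by
    refine Integrable.mono' (integrable_const (M * C * Cφ)) hFm ?_
    rw [Measure.prod_restrict]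
    refine ae_restrict_of_forall_mem (measurableSet_Icc.prod measurableSet_Icc) ?_
    rintro ⟨s, t⟩ ⟨hs, ht⟩
    rw [hF, Real.norm_eq_abs, abs_mul, abs_mul]
    refine mul_le_mul (mul_le_mul (hM' s hs t ht) (hgb t ht) (abs_nonneg _) hM0)
      (by simpa [Real.norm_eq_abs] using hCφ s hs) (abs_nonneg _) (by positivity)
  have hswap : (∫ s in Icc a b, ∫ t in Icc a b, K s t * g t * φ k s)
      = ∫ t in Icc a b, ∫ s in Icc a b, K s t * g t * φ k s := by
    exact integral_integral_swap (f := fun s t => K s t * g t * φ k s) hFint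
  have h1 : (∫ s in Icc a b, (∫ t in Icc a b, K s t * g t) * φ k s)
      = ∫ s in Icc a b, ∫ t in Icc a b, K s t * g t * φ k s := by
    apply setIntegral_congr_fun measurableSet_Icc
    intro s _
    show (∫ t in Icc a b, K s t * g t) * φ k s = ∫ t in Icc a b, K s t * g t * φ k s
    exact (integral_mul_const _ _).symm
  rw [h1, hswap]
  have h2 : ∀ t ∈ Icc a b,
      (∫ s in Icc a b, K s t * g t * φ k s) = (lam k * φ k t) * g t := by
    intro t ht
    have e1 : (∫ s in Icc a b, K s t * g t * φ k s)
        = (∫ s in Icc a b, K t s * φ k s) * g t := by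
      rw [← integral_mul_const]
      apply setIntegral_congr_fun measurableSet_Icc
      intro s hs
      show K s t * g t * φ k s = K t s * φ k s * g t
      rw [hKsymm s hs t ht]; ring
    rw [e1, heigk t ht]
  rw [setIntegral_congr_fun measurableSet_Icc h2, ← integral_const_mul]
  apply setIntegral_congr_fun measurableSet_Icc
  intro t _
  show lam k * φ k t * g t = lam k * (g t * φ k t)
  ring

lemma bessel (a b : ℝ) (hab : a < b) (K : ℝ → ℝ → ℝ)
    (hKcont : ContinuousOn (fun p : ℝ × ℝ => K p.1 p.2) (Icc a b ×ˢ Icc a b))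
    (hKsymm : ∀ s ∈ Icc a b, ∀ t ∈ Icc a b, K s t = K t s)
    (hKpsd : ∀ (n : ℕ) (t : Fin n → ℝ) (c : Fin n → ℝ), (∀ i, t i ∈ Icc a b) →
      0 ≤ ∑ i, ∑ j, c i * c j * K (t i) (t j))
    (lam : ℕ → ℝ) (φ : ℕ → ℝ → ℝ)
    (hφcont : ∀ k, ContinuousOn (φ k) (Icc a b))
    (hon : ∀ j k, (∫ t in Icc a b, φ j t * φ k t) = if j = k then 1 else 0)
    (heig : ∀ k, ∀ t ∈ Icc a b, (∫ s in Icc a b, K t s * φ k s) = lam k * φ k t)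
    (g : ℝ → ℝ) (hgm : AEStronglyMeasurable g (volume.restrict (Icc a b)))
    (C : ℝ) (hgb : ∀ s ∈ Icc a b, |g s| ≤ C) (N : ℕ) :
    ∑ k ∈ Finset.range N, lam k * (∫ t in Icc a b, g t * φ k t)^2
      ≤ ∫ s in Icc a b, (∫ t in Icc a b, K s t * g t) * g s := by
  have hba : (0:ℝ) < b - a := by linarith
  have hC0 : 0 ≤ C := le_trans (abs_nonneg _) (hgb a (left_mem_Icc.mpr hab.le))
  have hIccFin : volume (Icc a b) < ⊤ := by
    rw [Real.volume_Icc]; exact ENNReal.ofReal_lt_top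
  obtain ⟨M, hM⟩ := (isCompact_Icc.prod isCompact_Icc).exists_bound_of_continuousOn hKcont
  have hM' : ∀ s ∈ Icc a b, ∀ t ∈ Icc a b, |K s t| ≤ M := by
    intro s hs t ht; exact hM (s, t) ⟨hs, ht⟩
  have hM0 : 0 ≤ M :=
    le_trans (abs_nonneg _) (hM' a (left_mem_Icc.mpr hab.le) a (left_mem_Icc.mpr hab.le))
  have hKsec : ∀ s ∈ Icc a b, ContinuousOn (fun t => K s t) (Icc a b) := by
    intro s hs
    exact hKcont.comp (Continuous.continuousOn (Continuous.prodMk_right s)) (fun t ht => ⟨hs, ht⟩)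
  have hφaesm : ∀ k, AEStronglyMeasurable (φ k) (volume.restrict (Icc a b)) :=
    fun k => (hφcont k).aestronglyMeasurable measurableSet_Icc
  have hφB : ∀ k : ℕ, ∃ Bk : ℝ, (0 ≤ Bk) ∧ ∀ t ∈ Icc a b, |φ k t| ≤ Bk := by
    intro k
    obtain ⟨Bk, hBk⟩ := isCompact_Icc.exists_bound_of_continuousOn (hφcont k)
    exact ⟨Bk, le_trans (norm_nonneg _) (hBk a (left_mem_Icc.mpr hab.le)),
      fun t ht => by simpa [Real.norm_eq_abs] using hBk t ht⟩
  choose B hB0 hB using hφB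
  set c : ℕ → ℝ := fun k => ∫ t in Icc a b, g t * φ k t with hc
  set p : ℝ → ℝ := fun u => ∑ k ∈ Finset.range N, c k * φ k u with hp
  set p' : ℝ → ℝ := fun u => ∑ k ∈ Finset.range N, c k * (lam k * φ k u) with hp'
  set h : ℝ → ℝ := fun u => g u - p u with hh
  have hpcont : ContinuousOn p (Icc a b) :=
    continuousOn_finset_sum _ (fun k _ => continuousOn_const.mul (hφcont k))
  have hp'cont : ContinuousOn p' (Icc a b) :=
    continuousOn_finset_sum _ (fun k _ => continuousOn_const.mul
      (continuousOn_const.mul (hφcont k)))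
  set Cp : ℝ := ∑ k ∈ Finset.range N, |c k| * B k with hCp
  have hpbd : ∀ s ∈ Icc a b, |p s| ≤ Cp := by
    intro s hs
    refine le_trans (Finset.abs_sum_le_sum_abs _ _) (Finset.sum_le_sum ?_)
    intro k _
    rw [abs_mul]
    exact mul_le_mul_of_nonneg_left (hB k s hs) (abs_nonneg _)
  have hhm : AEStronglyMeasurable h (volume.restrict (Icc a b)) :=
    hgm.sub (hpcont.aestronglyMeasurable measurableSet_Icc)
  have hhbd : ∀ s ∈ Icc a b, |h s| ≤ C + Cp := by
    intro s hs
    calc |h s| ≤ |g s| + |p s| := abs_sub _ _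
      _ ≤ C + Cp := add_le_add (hgb s hs) (hpbd s hs)
  have key := double_pos a b hab K hKcont hKpsd h hhm (C + Cp) hhbd
  -- integrability of sections against h and g
  have hKg_int : ∀ s ∈ Icc a b, IntegrableOn (fun t => K s t * g t) (Icc a b) := by
    intro s hs
    refine integrableOn_of_bdd measurableSet_Icc hIccFin
      (((hKsec s hs).aestronglyMeasurable measurableSet_Icc).mul hgm) (C := M*C) ?_
    intro t ht
    rw [abs_mul]
    exact mul_le_mul (hM' s hs t ht) (hgb t ht) (abs_nonneg _) hM0
  have hKφ_int : ∀ s ∈ Icc a b, ∀ k : ℕ,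
      IntegrableOn (fun t => K s t * φ k t) (Icc a b) := by
    intro s hs k
    exact ((hKsec s hs).mul (hφcont k)).integrableOn_Icc
  -- E2 : section against h
  have E2 : ∀ s ∈ Icc a b,
      (∫ t in Icc a b, K s t * h t) = (∫ t in Icc a b, K s t * g t) - p' s := by
    intro s hs
    have e1 : (fun t => K s t * h t) = fun t => K s t * g t - K s t * p t := by
      funext t; rw [hh]; ring
    have hKp_int : IntegrableOn (fun t => K s t * p t) (Icc a b) :=
      ((hKsec s hs).mul hpcont).integrableOn_Icc
    rw [e1, integral_sub (hKg_int s hs) hKp_int]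
    congr 1
    have e2 : (fun t => K s t * p t) = fun t => ∑ k ∈ Finset.range N, c k * (K s t * φ k t) := by
      funext t; rw [hp, Finset.mul_sum]
      apply Finset.sum_congr rfl; intros; ring
    rw [e2, integral_finset_sum]
    · rw [hp']
      apply Finset.sum_congr rfl
      intro k _
      rw [integral_const_mul, heig k s hs]
    · intro k _
      exact (hKφ_int s hs k).const_mul _
  -- Tg measurability / boundedness
  have hprod : AEStronglyMeasurable (fun q : ℝ × ℝ => K q.1 q.2 * g q.2)
      ((volume.restrict (Icc a b)).prod (volume.restrict (Icc a b))) := by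
    apply AEStronglyMeasurable.mul
    · rw [Measure.prod_restrict]
      exact hKcont.aestronglyMeasurable (measurableSet_Icc.prod measurableSet_Icc)
    · exact hgm.comp_snd
  have hTg_aesm : AEStronglyMeasurable (fun s => ∫ t in Icc a b, K s t * g t)
      (volume.restrict (Icc a b)) := hprod.integral_prod_right'
  have hTg_bd : ∀ s ∈ Icc a b, |∫ t in Icc a b, K s t * g t| ≤ M * C * (b - a) := by
    intro s hs
    have h1 : ∀ t ∈ Icc a b, ‖K s t * g t‖ ≤ M * C := by
      intro t ht
      rw [Real.norm_eq_abs, abs_mul]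
      exact mul_le_mul (hM' s hs t ht) (hgb t ht) (abs_nonneg _) hM0
    calc |∫ t in Icc a b, K s t * g t| ≤ (M * C) * (volume (Icc a b)).toReal :=
          norm_setIntegral_le_of_norm_le_const hIccFin h1
      _ = M * C * (b - a) := by rw [Real.volume_Icc, ENNReal.toReal_ofReal hba.le]
  -- integrabilities of the four products
  have I1 : IntegrableOn (fun s => (∫ t in Icc a b, K s t * g t) * g s) (Icc a b) := by
    refine integrableOn_of_bdd measurableSet_Icc hIccFin (hTg_aesm.mul hgm)
      (C := M * C * (b-a) * C) ?_
    intro s hs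
    rw [abs_mul]
    exact mul_le_mul (hTg_bd s hs) (hgb s hs) (abs_nonneg _) (by positivity)
  have I2 : IntegrableOn (fun s => (∫ t in Icc a b, K s t * g t) * p s) (Icc a b) := by
    refine integrableOn_of_bdd measurableSet_Icc hIccFin
      (hTg_aesm.mul (hpcont.aestronglyMeasurable measurableSet_Icc))
      (C := M * C * (b-a) * Cp) ?_
    intro s hs
    rw [abs_mul]
    refine mul_le_mul (hTg_bd s hs) (hpbd s hs) (abs_nonneg _) (by positivity)
  have I3 : IntegrableOn (fun s => p' s * g s) (Icc a b) := by
    refine integrableOn_of_bdd measurableSet_Icc hIccFin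
      ((hp'cont.aestronglyMeasurable measurableSet_Icc).mul hgm)
      (C := (∑ k ∈ Finset.range N, |c k| * (|lam k| * B k)) * C) ?_
    intro s hs
    rw [abs_mul]
    refine mul_le_mul ?_ (hgb s hs) (abs_nonneg _) ?_
    · refine le_trans (Finset.abs_sum_le_sum_abs _ _) (Finset.sum_le_sum ?_)
      intro k _
      rw [abs_mul, abs_mul]
      exact mul_le_mul_of_nonneg_left
        (mul_le_mul_of_nonneg_left (hB k s hs) (abs_nonneg _)) (abs_nonneg _)
    · apply Finset.sum_nonneg
      intro k _
      have := hB0 k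
      positivity
  have I4 : IntegrableOn (fun s => p' s * p s) (Icc a b) :=
    (hp'cont.mul hpcont).integrableOn_Icc
  -- rewrite key
  have hkey2 : 0 ≤ ∫ s in Icc a b,
      ((∫ t in Icc a b, K s t * g t) * g s - (∫ t in Icc a b, K s t * g t) * p s
        - (p' s * g s - p' s * p s)) := by
    refine le_trans key (le_of_eq ?_)
    apply setIntegral_congr_fun measurableSet_Icc
    intro s hs
    show (∫ t in Icc a b, K s t * h t) * h s = _
    rw [E2 s hs, hh]
    ring
  have I12 : Integrable (fun s => (∫ t in Icc a b, K s t * g t) * g s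
      - (∫ t in Icc a b, K s t * g t) * p s) (volume.restrict (Icc a b)) := I1.sub I2
  have I34 : Integrable (fun s => p' s * g s - p' s * p s)
      (volume.restrict (Icc a b)) := I3.sub I4
  rw [integral_sub I12 I34, integral_sub I1 I2, integral_sub I3 I4] at hkey2
  -- evaluate the three correction integrals
  have hTgp : (∫ s in Icc a b, (∫ t in Icc a b, K s t * g t) * p s)
      = ∑ k ∈ Finset.range N, lam k * (c k)^2 := by
    have e1 : (fun s => (∫ t in Icc a b, K s t * g t) * p s)
        = fun s => ∑ k ∈ Finset.range N, c k * ((∫ t in Icc a b, K s t * g t) * φ k s) := by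
      funext s; rw [hp, Finset.mul_sum]
      apply Finset.sum_congr rfl; intros; ring
    rw [e1, integral_finset_sum]
    · apply Finset.sum_congr rfl
      intro k _
      rw [integral_const_mul,
        fubini_sym a b hab K hKcont hKsymm lam φ k (hφcont k) (heig k) g hgm C hgb]
      show c k * (lam k * c k) = lam k * c k ^ 2
      ring
    · intro k _
      refine Integrable.const_mul ?_ _
      refine integrableOn_of_bdd measurableSet_Icc hIccFin
        (hTg_aesm.mul (hφaesm k)) (C := M * C * (b-a) * B k) ?_
      intro s hs
      rw [abs_mul]
      exact mul_le_mul (hTg_bd s hs) (hB k s hs) (abs_nonneg _) (by positivity)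
  have hφg_int : ∀ k : ℕ, IntegrableOn (fun s => φ k s * g s) (Icc a b) := by
    intro k
    refine integrableOn_of_bdd measurableSet_Icc hIccFin ((hφaesm k).mul hgm)
      (C := B k * C) ?_
    intro s hs
    rw [abs_mul]
    exact mul_le_mul (hB k s hs) (hgb s hs) (abs_nonneg _) (hB0 k)
  have hp'g : (∫ s in Icc a b, p' s * g s) = ∑ k ∈ Finset.range N, lam k * (c k)^2 := by
    have e1 : (fun s => p' s * g s)
        = fun s => ∑ k ∈ Finset.range N, (c k * lam k) * (φ k s * g s) := by
      funext s; rw [hp', Finset.sum_mul]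
      apply Finset.sum_congr rfl; intros; ring
    rw [e1, integral_finset_sum]
    · apply Finset.sum_congr rfl
      intro k _
      rw [integral_const_mul]
      have heq : (∫ s in Icc a b, φ k s * g s) = c k :=
        setIntegral_congr_fun measurableSet_Icc (fun s _ => mul_comm _ _)
      rw [heq]
      ring
    · intro k _
      exact (hφg_int k).const_mul _
  have hp'p : (∫ s in Icc a b, p' s * p s) = ∑ k ∈ Finset.range N, lam k * (c k)^2 := by
    have e1 : (fun s => p' s * p s)
        = fun s => ∑ k ∈ Finset.range N, ∑ j ∈ Finset.range N,
            (c k * lam k * c j) * (φ k s * φ j s) := by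
      funext s; rw [hp', hp, Finset.sum_mul_sum]
      apply Finset.sum_congr rfl; intro k _
      apply Finset.sum_congr rfl; intro j _
      ring
    have hφφ_int : ∀ k j : ℕ,
        IntegrableOn (fun s => (c k * lam k * c j) * (φ k s * φ j s)) (Icc a b) := by
      intro k j
      exact (((hφcont k).mul (hφcont j)).integrableOn_Icc).const_mul _
    rw [e1, integral_finset_sum _ (fun k _ => integrable_finset_sum _ (fun j _ => hφφ_int k j))]
    apply Finset.sum_congr rfl
    intro k hk
    rw [integral_finset_sum _ (fun j _ => hφφ_int k j)]
    have e3 : ∀ j ∈ Finset.range N,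
        (∫ s in Icc a b, (c k * lam k * c j) * (φ k s * φ j s))
          = if k = j then (fun j => c k * lam k * c k) j else 0 := by
      intro j _
      rw [integral_const_mul, hon k j]
      by_cases hkj : k = j
      · simp [hkj]
      · simp [hkj]
    rw [Finset.sum_congr rfl e3,
      Finset.sum_ite_eq (Finset.range N) k (fun _ => c k * lam k * c k), if_pos hk]
    ring
  rw [hTgp, hp'g, hp'p] at hkey2
  linarith

lemma diag_bound (a b : ℝ) (hab : a < b) (K : ℝ → ℝ → ℝ)
    (hKcont : ContinuousOn (fun p : ℝ × ℝ => K p.1 p.2) (Icc a b ×ˢ Icc a b))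
    (hKsymm : ∀ s ∈ Icc a b, ∀ t ∈ Icc a b, K s t = K t s)
    (hKpsd : ∀ (n : ℕ) (t : Fin n → ℝ) (c : Fin n → ℝ), (∀ i, t i ∈ Icc a b) →
      0 ≤ ∑ i, ∑ j, c i * c j * K (t i) (t j))
    (lam : ℕ → ℝ) (φ : ℕ → ℝ → ℝ)
    (hφcont : ∀ k, ContinuousOn (φ k) (Icc a b))
    (hon : ∀ j k, (∫ t in Icc a b, φ j t * φ k t) = if j = k then 1 else 0)
    (heig : ∀ k, ∀ t ∈ Icc a b, (∫ s in Icc a b, K t s * φ k s) = lam k * φ k t)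
    (N : ℕ) :
    ∀ t0 ∈ Icc a b, ∑ k ∈ Finset.range N, lam k * (φ k t0)^2 ≤ K t0 t0 := by
  intro t0 ht0
  by_contra hlt
  push_neg at hlt
  set q : ℝ := ∑ k ∈ Finset.range N, lam k * (φ k t0)^2 - K t0 t0 with hq
  have hq0 : 0 < q := by rw [hq]; linarith
  set R : ℝ × ℝ → ℝ :=
    fun p => K p.1 p.2 - ∑ k ∈ Finset.range N, lam k * φ k p.1 * φ k p.2 with hR
  have hRcont : ContinuousOn R (Icc a b ×ˢ Icc a b) := by
    apply hKcont.sub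
    apply continuousOn_finset_sum
    intro k _
    apply ContinuousOn.mul
    · apply ContinuousOn.mul continuousOn_const
      exact (hφcont k).comp continuous_fst.continuousOn (fun p hp => hp.1)
    · exact (hφcont k).comp continuous_snd.continuousOn (fun p hp => hp.2)
  have hRt0 : R (t0, t0) = -q := by
    have e : ∑ k ∈ Finset.range N, lam k * φ k t0 * φ k t0
        = ∑ k ∈ Finset.range N, lam k * (φ k t0)^2 :=
      Finset.sum_congr rfl (fun k _ => by ring)
    show K t0 t0 - ∑ k ∈ Finset.range N, lam k * φ k t0 * φ k t0 = -q
    rw [e, hq]; ring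
  -- continuity at (t0,t0)
  have hcw : ContinuousWithinAt R (Icc a b ×ˢ Icc a b) (t0, t0) :=
    hRcont (t0, t0) ⟨ht0, ht0⟩
  rw [Metric.continuousWithinAt_iff] at hcw
  obtain ⟨δ, hδ0, hδ⟩ := hcw (q/2) (by linarith)
  -- subinterval
  set c : ℝ := max a (t0 - δ/2) with hcdef
  set d : ℝ := min b (t0 + δ/2) with hddef
  have hcle : c ≤ t0 := max_le ht0.1 (by linarith)
  have hdge : t0 ≤ d := le_min ht0.2 (by linarith)
  have hcd : c < d := by
    rcases lt_or_ge t0 b with h | h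
    · exact lt_of_le_of_lt hcle (lt_min h (by linarith))
    · have hb : t0 = b := le_antisymm ht0.2 h
      have : c < b := max_lt hab (by rw [hb]; linarith)
      calc c < b := this
        _ = min b (t0 + δ/2) := (min_eq_left (by rw [hb]; linarith)).symm
  have hsub : Icc c d ⊆ Icc a b := fun x hx =>
    ⟨le_trans (le_max_left a _) hx.1, le_trans hx.2 (min_le_left b _)⟩
  have hclose : ∀ x ∈ Icc c d, |x - t0| ≤ δ/2 := by
    intro x hx
    rw [abs_le]
    constructor
    · have := le_trans (le_max_right a (t0 - δ/2)) hx.1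
      linarith
    · have := le_trans hx.2 (min_le_right b (t0 + δ/2))
      linarith
  have hRneg : ∀ s ∈ Icc c d, ∀ t ∈ Icc c d, R (s, t) ≤ -q/2 := by
    intro s hs t ht
    have hd : dist ((s, t) : ℝ × ℝ) ((t0, t0) : ℝ × ℝ) < δ := by
      rw [Prod.dist_eq]
      apply max_lt <;> rw [Real.dist_eq]
      · exact lt_of_le_of_lt (hclose s hs) (by linarith)
      · exact lt_of_le_of_lt (hclose t ht) (by linarith)
    have := hδ ⟨hsub hs, hsub ht⟩ hd
    rw [Real.dist_eq, hRt0] at this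
    have := abs_lt.mp this
    linarith [this.2]
  -- test function
  set g : ℝ → ℝ := (Icc c d).indicator (fun _ => (1:ℝ)) with hg
  have hgm : AEStronglyMeasurable g (volume.restrict (Icc a b)) :=
    ((measurable_const.indicator measurableSet_Icc).aestronglyMeasurable)
  have hgb : ∀ s ∈ Icc a b, |g s| ≤ 1 := by
    intro s _
    rw [hg]
    by_cases hx : s ∈ Icc c d
    · rw [Set.indicator_of_mem hx]; simp
    · rw [Set.indicator_of_notMem hx]; simp
  have hbes := bessel a b hab K hKcont hKsymm hKpsd lam φ hφcont hon heig g hgm 1 hgb N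
  -- identify the coefficients
  have hcdsub : Icc c d ∩ Icc a b = Icc c d := inter_eq_left.mpr hsub
  have hck : ∀ k : ℕ, (∫ t in Icc a b, g t * φ k t) = ∫ t in Icc c d, φ k t := by
    intro k
    have e1 : (fun t => g t * φ k t) = (Icc c d).indicator (fun t => φ k t) := by
      funext t
      rw [hg]
      by_cases hx : t ∈ Icc c d
      · rw [Set.indicator_of_mem hx, Set.indicator_of_mem hx]; simp
      · rw [Set.indicator_of_notMem hx, Set.indicator_of_notMem hx]; simp
    rw [e1, integral_indicator measurableSet_Icc, Measure.restrict_restrict measurableSet_Icc,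
      hcdsub]
  -- compute W over the small square
  have hWcd : (∫ s in Icc a b, (∫ t in Icc a b, K s t * g t) * g s)
      = ∫ s in Icc c d, ∫ t in Icc c d, K s t := by
    have e2 : ∀ s : ℝ, (∫ t in Icc a b, K s t * g t) = ∫ t in Icc c d, K s t := by
      intro s
      have e1 : (fun t => K s t * g t) = (Icc c d).indicator (fun t => K s t) := by
        funext t; rw [hg]
        by_cases hx : t ∈ Icc c d
        · rw [Set.indicator_of_mem hx, Set.indicator_of_mem hx]; simp
        · rw [Set.indicator_of_notMem hx, Set.indicator_of_notMem hx]; simp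
      rw [e1, integral_indicator measurableSet_Icc,
        Measure.restrict_restrict measurableSet_Icc, hcdsub]
    have e3 : (fun s => (∫ t in Icc a b, K s t * g t) * g s)
        = (Icc c d).indicator (fun s => ∫ t in Icc c d, K s t) := by
      funext s
      rw [e2 s, hg]
      by_cases hx : s ∈ Icc c d
      · rw [Set.indicator_of_mem hx, Set.indicator_of_mem hx]; simp
      · rw [Set.indicator_of_notMem hx, Set.indicator_of_notMem hx]; simp
    rw [e3, integral_indicator measurableSet_Icc,
      Measure.restrict_restrict measurableSet_Icc, hcdsub]
  -- integrability of R sections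
  have hRsec : ∀ s ∈ Icc c d, IntegrableOn (fun t => R (s, t)) (Icc c d) := by
    intro s hs
    apply ContinuousOn.integrableOn_Icc
    exact hRcont.comp (Continuous.continuousOn (Continuous.prodMk_right s))
      (fun t ht => ⟨hsub hs, hsub ht⟩)
  have hdc : (0:ℝ) < d - c := by linarith
  have hcdFin : volume (Icc c d) < ⊤ := by
    rw [Real.volume_Icc]; exact ENNReal.ofReal_lt_top
  have hcdvol : (volume (Icc c d)).toReal = d - c := by
    rw [Real.volume_Icc, ENNReal.toReal_ofReal hdc.le]
  have hconstint : IntegrableOn (fun _ : ℝ => -q/2) (Icc c d) :=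
    integrableOn_const hcdFin.ne
  -- split the inner integral
  have hKsplit : ∀ s ∈ Icc c d, (∫ t in Icc c d, K s t)
      = (∫ t in Icc c d, R (s, t))
        + ∑ k ∈ Finset.range N, lam k * φ k s * (∫ t in Icc c d, φ k t) := by
    intro s hs
    have hQint : IntegrableOn
        (fun t => ∑ k ∈ Finset.range N, lam k * φ k s * φ k t) (Icc c d) :=
      ContinuousOn.integrableOn_Icc (continuousOn_finset_sum _
        (fun k _ => continuousOn_const.mul ((hφcont k).mono hsub)))
    have e4 : (fun t => K s t)
        = fun t => R (s, t) + ∑ k ∈ Finset.range N, lam k * φ k s * φ k t := by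
      funext t
      have hRst : R (s, t) = K s t - ∑ k ∈ Finset.range N, lam k * φ k s * φ k t := rfl
      rw [hRst]; ring
    rw [e4, integral_add (hRsec s hs) hQint]
    congr 1
    rw [integral_finset_sum _
      (fun k _ => (((hφcont k).mono hsub).integrableOn_Icc).const_mul _)]
    apply Finset.sum_congr rfl
    intro k _
    exact integral_const_mul _ _
  -- bound on the R double integral
  obtain ⟨MR, hMR⟩ := (isCompact_Icc.prod isCompact_Icc).exists_bound_of_continuousOn hRcont
  have hRprod_aesm : AEStronglyMeasurable R
      ((volume.restrict (Icc c d)).prod (volume.restrict (Icc c d))) := by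
    rw [Measure.prod_restrict]
    exact (hRcont.mono (prod_mono hsub hsub)).aestronglyMeasurable
      (measurableSet_Icc.prod measurableSet_Icc)
  have hRin_aesm : AEStronglyMeasurable (fun s => ∫ t in Icc c d, R (s, t))
      (volume.restrict (Icc c d)) := hRprod_aesm.integral_prod_right'
  have hRin_absbd : ∀ s ∈ Icc c d, |∫ t in Icc c d, R (s, t)| ≤ MR * (d - c) := by
    intro s hs
    calc |∫ t in Icc c d, R (s, t)| ≤ MR * (volume (Icc c d)).toReal :=
        norm_setIntegral_le_of_norm_le_const hcdFin
          (fun t ht => hMR (s, t) ⟨hsub hs, hsub ht⟩)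
      _ = MR * (d - c) := by rw [hcdvol]
  have hRout_int : IntegrableOn (fun s => ∫ t in Icc c d, R (s, t)) (Icc c d) :=
    integrableOn_of_bdd measurableSet_Icc hcdFin hRin_aesm hRin_absbd
  have hRin_bd : ∀ s ∈ Icc c d, (∫ t in Icc c d, R (s, t)) ≤ -q/2 * (d - c) := by
    intro s hs
    calc (∫ t in Icc c d, R (s, t)) ≤ ∫ _t in Icc c d, (-q/2 : ℝ) :=
        setIntegral_mono_on (hRsec s hs) hconstint measurableSet_Icc
          (fun t ht => hRneg s hs t ht)
      _ = -q/2 * (d - c) := by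
          rw [setIntegral_const, smul_eq_mul, measureReal_def, hcdvol]; ring
  have hRout : (∫ s in Icc c d, ∫ t in Icc c d, R (s, t)) ≤ -q/2 * (d - c) * (d - c) := by
    calc (∫ s in Icc c d, ∫ t in Icc c d, R (s, t))
        ≤ ∫ _s in Icc c d, (-q/2 * (d - c)) := by
          refine setIntegral_mono_on hRout_int ?_ measurableSet_Icc hRin_bd
          exact integrableOn_const hcdFin.ne
      _ = -q/2 * (d - c) * (d - c) := by
          rw [setIntegral_const, smul_eq_mul, measureReal_def, hcdvol]; ring
  -- the Q double integral
  have hQout : (∫ s in Icc c d,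
        ∑ k ∈ Finset.range N, lam k * φ k s * (∫ t in Icc c d, φ k t))
      = ∑ k ∈ Finset.range N, lam k * (∫ t in Icc c d, φ k t)^2 := by
    rw [integral_finset_sum _ (fun k _ =>
      ((((hφcont k).mono hsub).integrableOn_Icc).const_mul _).mul_const _)]
    apply Finset.sum_congr rfl
    intro k _
    have e5 : (fun s => lam k * φ k s * (∫ t in Icc c d, φ k t))
        = fun s => (lam k * (∫ t in Icc c d, φ k t)) * φ k s := by
      funext s; ring
    rw [e5, integral_const_mul]
    ring
  -- combine
  have hQint2 : IntegrableOn
      (fun s => ∑ k ∈ Finset.range N, lam k * φ k s * (∫ t in Icc c d, φ k t))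
      (Icc c d) :=
    ContinuousOn.integrableOn_Icc (continuousOn_finset_sum _
      (fun k _ => (continuousOn_const.mul ((hφcont k).mono hsub)).mul continuousOn_const))
  have hWsplit : (∫ s in Icc c d, ∫ t in Icc c d, K s t)
      = (∫ s in Icc c d, ∫ t in Icc c d, R (s, t))
        + ∑ k ∈ Finset.range N, lam k * (∫ t in Icc c d, φ k t)^2 := by
    rw [setIntegral_congr_fun measurableSet_Icc (fun s hs => hKsplit s hs),
      integral_add hRout_int hQint2, hQout]
  simp only [hck] at hbes
  rw [hWcd, hWsplit] at hbes
  nlinarith [mul_pos (mul_pos (half_pos hq0) hdc) hdc]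


/-- Mercer expansion: a continuous symmetric positive semidefinite kernel `K` on
`J × J` (`J = [a,b]` compact) expands as `K(s,t) = ∑_k λ_k φ_k(s) φ_k(t)` in its
spectral data — continuous orthonormal eigenfunctions `φ_k` with eigenvalues
`λ_k > 0` spanning the complement of the kernel of the integral operator — and
the series converges absolutely and uniformly on `J × J`. -/
theorem mercer_expansion
    (a b : ℝ) (hab : a ≤ b)
    (K : ℝ → ℝ → ℝ)
    (hKcont : ContinuousOn (fun p : ℝ × ℝ => K p.1 p.2)
      (Set.Icc a b ×ˢ Set.Icc a b))
    (hKsymm : ∀ s ∈ Set.Icc a b, ∀ t ∈ Set.Icc a b, K s t = K t s)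
    (hKpsd : ∀ (n : ℕ) (t : Fin n → ℝ) (c : Fin n → ℝ),
      (∀ i, t i ∈ Set.Icc a b) →
      0 ≤ ∑ i, ∑ j, c i * c j * K (t i) (t j))
    (lam : ℕ → ℝ) (hpos : ∀ k, 0 < lam k)
    (φ : ℕ → ℝ → ℝ) (hφcont : ∀ k, ContinuousOn (φ k) (Set.Icc a b))
    (hon : ∀ j k, (∫ t in Set.Icc a b, φ j t * φ k t) = if j = k then 1 else 0)
    (heig : ∀ k, ∀ t ∈ Set.Icc a b,
      (∫ s in Set.Icc a b, K t s * φ k s) = lam k * φ k t)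
    -- completeness: any L² function orthogonal to all the `φ_k` is annihilated
    -- by the integral operator, i.e. `(λ_k, φ_k)` is all of the spectral data
    (hcomplete : ∀ g : ℝ → ℝ, MemLp g 2 (volume.restrict (Set.Icc a b)) →
      (∀ k, (∫ t in Set.Icc a b, g t * φ k t) = 0) →
      ∀ t ∈ Set.Icc a b, (∫ s in Set.Icc a b, K t s * g s) = 0) :
    (∀ s ∈ Set.Icc a b, ∀ t ∈ Set.Icc a b,
      Summable (fun k => |lam k * φ k s * φ k t|) ∧
      HasSum (fun k => lam k * φ k s * φ k t) (K s t)) ∧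
    TendstoUniformlyOn
      (fun N (p : ℝ × ℝ) => ∑ k ∈ Finset.range N, lam k * φ k p.1 * φ k p.2)
      (fun p => K p.1 p.2) Filter.atTop (Set.Icc a b ×ˢ Set.Icc a b) := by
  classical
  -- a < b
  have hab' : a < b := by
    rcases lt_or_eq_of_le hab with h | h
    · exact h
    · exfalso
      have h0 := hon 0 0
      rw [if_pos rfl] at h0
      have hz : volume (Icc a b) = 0 := by
        rw [← h, Real.volume_Icc]
        simp
      rw [Measure.restrict_eq_zero.mpr hz, integral_zero_measure] at h0
      exact one_ne_zero h0.symm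
  have hba : (0:ℝ) < b - a := by linarith
  have hIccFin : volume (Icc a b) < ⊤ := by
    rw [Real.volume_Icc]; exact ENNReal.ofReal_lt_top
  haveI hfinrestrict : IsFiniteMeasure (volume.restrict (Icc a b)) :=
    ⟨by rw [Measure.restrict_apply_univ]; exact hIccFin⟩
  obtain ⟨M, hM⟩ := (isCompact_Icc.prod isCompact_Icc).exists_bound_of_continuousOn hKcont
  have hM' : ∀ s ∈ Icc a b, ∀ t ∈ Icc a b, |K s t| ≤ M := by
    intro s hs t ht; exact hM (s, t) ⟨hs, ht⟩
  have hM0 : 0 ≤ M :=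
    le_trans (abs_nonneg _) (hM' a (left_mem_Icc.mpr hab) a (left_mem_Icc.mpr hab))
  have hKsec : ∀ s ∈ Icc a b, ContinuousOn (fun t => K s t) (Icc a b) := by
    intro s hs
    exact hKcont.comp (Continuous.continuousOn (Continuous.prodMk_right s)) (fun t ht => ⟨hs, ht⟩)
  have hφaesm : ∀ k, AEStronglyMeasurable (φ k) (volume.restrict (Icc a b)) :=
    fun k => (hφcont k).aestronglyMeasurable measurableSet_Icc
  have hφB : ∀ k : ℕ, ∃ Bk : ℝ, (0 ≤ Bk) ∧ ∀ t ∈ Icc a b, |φ k t| ≤ Bk := by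
    intro k
    obtain ⟨Bk, hBk⟩ := isCompact_Icc.exists_bound_of_continuousOn (hφcont k)
    exact ⟨Bk, le_trans (norm_nonneg _) (hBk a (left_mem_Icc.mpr hab)),
      fun t ht => by simpa [Real.norm_eq_abs] using hBk t ht⟩
  choose B hB0 hB using hφB
  have hdiag := diag_bound a b hab' K hKcont hKsymm hKpsd lam φ hφcont hon heig
  -- partial sums of the diagonal series are dominated by the diagonal values
  have hPsumBdK : ∀ t ∈ Icc a b, ∀ u : Finset ℕ,
      (∑ k ∈ u, lam k * (φ k t)^2) ≤ K t t := by
    intro t ht u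
    obtain ⟨n, hn⟩ := u.exists_nat_subset_range
    calc (∑ k ∈ u, lam k * (φ k t)^2) ≤ ∑ k ∈ Finset.range n, lam k * (φ k t)^2 :=
        Finset.sum_le_sum_of_subset_of_nonneg hn
          (fun k _ _ => mul_nonneg (hpos k).le (sq_nonneg _))
      _ ≤ K t t := hdiag n t ht
  have hPsumBd : ∀ t ∈ Icc a b, ∀ u : Finset ℕ,
      (∑ k ∈ u, lam k * (φ k t)^2) ≤ M := by
    intro t ht u
    exact le_trans (hPsumBdK t ht u) (le_trans (le_abs_self _) (hM' t ht t ht))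
  have hQsummable : ∀ t ∈ Icc a b, Summable (fun k => lam k * (φ k t)^2) :=
    fun t ht => summable_of_sum_le (fun k => mul_nonneg (hpos k).le (sq_nonneg _))
      (hPsumBd t ht)
  have hQleK : ∀ t ∈ Icc a b, (∑' k, lam k * (φ k t)^2) ≤ K t t :=
    fun t ht => Summable.tsum_le_of_sum_le (hQsummable t ht) (hPsumBdK t ht)
  -- Cauchy-Schwarz on finite sums
  have hCS : ∀ (s t : ℝ) (u : Finset ℕ),
      (∑ k ∈ u, |lam k * φ k s * φ k t|)
        ≤ Real.sqrt (∑ k ∈ u, lam k * (φ k s)^2)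
          * Real.sqrt (∑ k ∈ u, lam k * (φ k t)^2) := by
    intro s t u
    have h1 : ∀ x : ℝ, (∑ k ∈ u, lam k * (φ k x)^2)
        = ∑ k ∈ u, (Real.sqrt (lam k) * |φ k x|)^2 := by
      intro x
      apply Finset.sum_congr rfl
      intro k _
      rw [mul_pow, Real.sq_sqrt (hpos k).le, sq_abs]
    have h2 : (∑ k ∈ u, |lam k * φ k s * φ k t|)
        = ∑ k ∈ u, (Real.sqrt (lam k) * |φ k s|) * (Real.sqrt (lam k) * |φ k t|) := by
      apply Finset.sum_congr rfl
      intro k _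
      rw [mul_mul_mul_comm, Real.mul_self_sqrt (hpos k).le, abs_mul, abs_mul,
        abs_of_pos (hpos k)]
      ring
    have h3 := Finset.sum_mul_sq_le_sq_mul_sq u
      (fun k => Real.sqrt (lam k) * |φ k s|) (fun k => Real.sqrt (lam k) * |φ k t|)
    have hX0 : 0 ≤ ∑ k ∈ u, (Real.sqrt (lam k) * |φ k s|) * (Real.sqrt (lam k) * |φ k t|) :=
      Finset.sum_nonneg (fun k _ => by positivity)
    have hA0 : 0 ≤ ∑ k ∈ u, (Real.sqrt (lam k) * |φ k s|)^2 :=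
      Finset.sum_nonneg (fun k _ => sq_nonneg _)
    have hB0' : 0 ≤ ∑ k ∈ u, (Real.sqrt (lam k) * |φ k t|)^2 :=
      Finset.sum_nonneg (fun k _ => sq_nonneg _)
    rw [h1, h1, h2]
    calc (∑ k ∈ u, (Real.sqrt (lam k) * |φ k s|) * (Real.sqrt (lam k) * |φ k t|))
        ≤ Real.sqrt ((∑ k ∈ u, (Real.sqrt (lam k) * |φ k s|)^2)
            * ∑ k ∈ u, (Real.sqrt (lam k) * |φ k t|)^2) :=
          (Real.le_sqrt hX0 (mul_nonneg hA0 hB0')).mpr h3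
      _ = _ := Real.sqrt_mul hA0 _
  have habsM : ∀ s ∈ Icc a b, ∀ t ∈ Icc a b, ∀ u : Finset ℕ,
      (∑ k ∈ u, |lam k * φ k s * φ k t|) ≤ M := by
    intro s hs t ht u
    calc (∑ k ∈ u, |lam k * φ k s * φ k t|)
        ≤ Real.sqrt (∑ k ∈ u, lam k * (φ k s)^2) * Real.sqrt (∑ k ∈ u, lam k * (φ k t)^2) :=
          hCS s t u
      _ ≤ Real.sqrt M * Real.sqrt M :=
          mul_le_mul (Real.sqrt_le_sqrt (hPsumBd s hs u)) (Real.sqrt_le_sqrt (hPsumBd t ht u))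
            (Real.sqrt_nonneg _) (Real.sqrt_nonneg _)
      _ = M := Real.mul_self_sqrt hM0
  have hsumAbs : ∀ s ∈ Icc a b, ∀ t ∈ Icc a b,
      Summable (fun k => |lam k * φ k s * φ k t|) :=
    fun s hs t ht => summable_of_sum_le (fun k => abs_nonneg _) (habsM s hs t ht)
  have hsum : ∀ s ∈ Icc a b, ∀ t ∈ Icc a b,
      Summable (fun k => lam k * φ k s * φ k t) :=
    fun s hs t ht => (hsumAbs s hs t ht).of_abs
  -- tail estimate
  have htail : ∀ s ∈ Icc a b, ∀ t ∈ Icc a b, ∀ N : ℕ,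
      |(∑' k, lam k * φ k s * φ k t) - ∑ k ∈ Finset.range N, lam k * φ k s * φ k t|
        ≤ Real.sqrt ((∑' k, lam k * (φ k s)^2) - ∑ k ∈ Finset.range N, lam k * (φ k s)^2)
            * Real.sqrt M := by
    intro s hs t ht N
    have hfs := hsum s hs t ht
    have htend : Tendsto
        (fun m => |(∑ k ∈ Finset.range m, lam k * φ k s * φ k t)
          - ∑ k ∈ Finset.range N, lam k * φ k s * φ k t|) atTop
        (nhds |(∑' k, lam k * φ k s * φ k t)
          - ∑ k ∈ Finset.range N, lam k * φ k s * φ k t|) :=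
      (hfs.hasSum.tendsto_sum_nat.sub tendsto_const_nhds).abs
    refine le_of_tendsto htend ?_
    filter_upwards [eventually_ge_atTop N] with m hm
    rw [← Finset.sum_Ico_eq_sub _ hm]
    calc |∑ k ∈ Finset.Ico N m, lam k * φ k s * φ k t|
        ≤ ∑ k ∈ Finset.Ico N m, |lam k * φ k s * φ k t| :=
          Finset.abs_sum_le_sum_abs _ _
      _ ≤ Real.sqrt (∑ k ∈ Finset.Ico N m, lam k * (φ k s)^2)
            * Real.sqrt (∑ k ∈ Finset.Ico N m, lam k * (φ k t)^2) := hCS s t _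
      _ ≤ Real.sqrt ((∑' k, lam k * (φ k s)^2)
            - ∑ k ∈ Finset.range N, lam k * (φ k s)^2) * Real.sqrt M := by
          refine mul_le_mul (Real.sqrt_le_sqrt ?_) (Real.sqrt_le_sqrt (hPsumBd t ht _))
            (Real.sqrt_nonneg _) (Real.sqrt_nonneg _)
          rw [Finset.sum_Ico_eq_sub _ hm]
          have h5 : (∑ k ∈ Finset.range m, lam k * (φ k s)^2)
              ≤ ∑' k, lam k * (φ k s)^2 :=
            Summable.sum_le_tsum _ (fun k _ => mul_nonneg (hpos k).le (sq_nonneg _)) (hQsummable s hs)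
          linarith
  -- the pointwise Mercer identity
  have hKS : ∀ s ∈ Icc a b, ∀ t ∈ Icc a b,
      K s t = ∑' k, lam k * φ k s * φ k t := by
    intro s hs
    set Sf : ℝ → ℝ := fun u => ∑' k, lam k * φ k s * φ k u with hSf
    -- uniform convergence in the second variable
    have hQs_tend : Tendsto (fun N => ∑ k ∈ Finset.range N, lam k * (φ k s)^2) atTop
        (nhds (∑' k, lam k * (φ k s)^2)) := (hQsummable s hs).hasSum.tendsto_sum_nat
    have htail0 : Tendsto
        (fun N => (∑' k, lam k * (φ k s)^2) - ∑ k ∈ Finset.range N, lam k * (φ k s)^2)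
        atTop (nhds 0) := by
      have := tendsto_const_nhds (x := ∑' k, lam k * (φ k s)^2) (f := atTop (α := ℕ))
      simpa using this.sub hQs_tend
    have hunif : TendstoUniformlyOn
        (fun N u => ∑ k ∈ Finset.range N, lam k * φ k s * φ k u) Sf atTop (Icc a b) := by
      rw [Metric.tendstoUniformlyOn_iff]
      intro ε hε
      have hε' : 0 < ε^2/(M+1) := by positivity
      filter_upwards [htail0.eventually_lt_const hε'] with N hN
      intro u hu
      rw [Real.dist_eq]
      have h1 := htail s hs u hu N
      set T := (∑' k, lam k * (φ k s)^2) - ∑ k ∈ Finset.range N, lam k * (φ k s)^2 with hT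
      have hT0 : 0 ≤ T := by
        rw [hT]
        have := Summable.sum_le_tsum (Finset.range N)
          (fun k _ => mul_nonneg (hpos k).le (sq_nonneg _)) (hQsummable s hs)
        linarith
      calc |Sf u - ∑ k ∈ Finset.range N, lam k * φ k s * φ k u|
          ≤ Real.sqrt T * Real.sqrt M := h1
        _ = Real.sqrt (T * M) := (Real.sqrt_mul hT0 M).symm
        _ < ε := by
            rw [Real.sqrt_lt' hε]
            have h9 : T * (M + 1) < ε ^ 2 := by
              have := (lt_div_iff₀ (show (0:ℝ) < M + 1 by linarith)).mp hN
              linarith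
            nlinarith
    have hSfcont : ContinuousOn Sf (Icc a b) :=
      hunif.continuousOn (Eventually.of_forall (fun N => continuousOn_finset_sum _
        (fun k _ => continuousOn_const.mul (hφcont k)))).frequently
    have hSfaesm : AEStronglyMeasurable Sf (volume.restrict (Icc a b)) :=
      hSfcont.aestronglyMeasurable measurableSet_Icc
    have hSfbd : ∀ u ∈ Icc a b, |Sf u| ≤ M := by
      intro u hu
      have h := ((hsum s hs u hu).hasSum.tendsto_sum_nat).abs
      exact le_of_tendsto h (Eventually.of_forall (fun m =>
        le_trans (Finset.abs_sum_le_sum_abs _ _) (habsM s hs u hu _)))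
    -- interchange of sum and integral against a bounded function
    have hswap : ∀ (ψ : ℝ → ℝ) (Cψ : ℝ),
        AEStronglyMeasurable ψ (volume.restrict (Icc a b)) →
        (∀ u ∈ Icc a b, |ψ u| ≤ Cψ) →
        Tendsto (fun N => ∑ k ∈ Finset.range N,
            (lam k * φ k s) * (∫ u in Icc a b, φ k u * ψ u)) atTop
          (nhds (∫ u in Icc a b, Sf u * ψ u)) := by
      intro ψ Cψ hψm hψb
      have hCψ0 : 0 ≤ Cψ := le_trans (abs_nonneg _) (hψb a (left_mem_Icc.mpr hab))
      have hFa : ∀ N : ℕ, AEStronglyMeasurable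
          (fun u => (∑ k ∈ Finset.range N, lam k * φ k s * φ k u) * ψ u)
          (volume.restrict (Icc a b)) := by
        intro N
        exact ((continuousOn_finset_sum _ (fun k _ =>
          continuousOn_const.mul (hφcont k))).aestronglyMeasurable measurableSet_Icc).mul hψm
      have hDCT := tendsto_integral_of_dominated_convergence (μ := volume.restrict (Icc a b))
        (F := fun N u => (∑ k ∈ Finset.range N, lam k * φ k s * φ k u) * ψ u)
        (f := fun u => Sf u * ψ u) (bound := fun _ => M * Cψ) hFa (integrable_const _)
        (fun N => ae_restrict_of_forall_mem measurableSet_Icc (fun u hu => by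
          rw [Real.norm_eq_abs, abs_mul]
          refine mul_le_mul (le_trans (Finset.abs_sum_le_sum_abs _ _) (habsM s hs u hu _))
            (hψb u hu) (abs_nonneg _) hM0))
        (ae_restrict_of_forall_mem measurableSet_Icc (fun u hu =>
          ((hsum s hs u hu).hasSum.tendsto_sum_nat).mul_const _))
      refine hDCT.congr ?_
      intro N
      have e : (fun u => (∑ k ∈ Finset.range N, lam k * φ k s * φ k u) * ψ u)
          = fun u => ∑ k ∈ Finset.range N, (lam k * φ k s) * (φ k u * ψ u) := by
        funext u
        rw [Finset.sum_mul]
        exact Finset.sum_congr rfl (fun k _ => by ring)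
      have hint : ∀ k : ℕ, IntegrableOn (fun u => φ k u * ψ u) (Icc a b) := by
        intro k
        refine integrableOn_of_bdd measurableSet_Icc hIccFin ((hφaesm k).mul hψm)
          (C := B k * Cψ) ?_
        intro u hu
        rw [abs_mul]
        exact mul_le_mul (hB k u hu) (hψb u hu) (abs_nonneg _) (hB0 k)
      rw [e, integral_finset_sum _ (fun k _ => (hint k).const_mul _)]
      exact Finset.sum_congr rfl (fun k _ => integral_const_mul _ _)
    -- the defect function
    set gd : ℝ → ℝ := fun u => K s u - Sf u with hgd
    have hKscont := hKsec s hs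
    have hgdcont : ContinuousOn gd (Icc a b) := hKscont.sub hSfcont
    have hgdaesm : AEStronglyMeasurable gd (volume.restrict (Icc a b)) :=
      hgdcont.aestronglyMeasurable measurableSet_Icc
    have hgdbd : ∀ u ∈ Icc a b, |gd u| ≤ M + M := by
      intro u hu
      calc |gd u| ≤ |K s u| + |Sf u| := abs_sub _ _
        _ ≤ M + M := add_le_add (hM' s hs u hu) (hSfbd u hu)
    have hSφ : ∀ k : ℕ, (∫ u in Icc a b, Sf u * φ k u) = lam k * φ k s := by
      intro k
      have h1 := hswap (φ k) (B k) (hφaesm k) (hB k)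
      have h2 : Tendsto (fun N => ∑ j ∈ Finset.range N,
          (lam j * φ j s) * (∫ u in Icc a b, φ j u * φ k u)) atTop
          (nhds (lam k * φ k s)) := by
        refine Tendsto.congr' ?_ (tendsto_const_nhds (x := lam k * φ k s))
        filter_upwards [eventually_ge_atTop (k+1)] with N hN
        rw [Finset.sum_congr rfl (fun j _ => by rw [hon j k])]
        simp only [mul_ite, mul_one, mul_zero]
        rw [Finset.sum_ite_eq' (Finset.range N) k (fun j => lam j * φ j s),
          if_pos (Finset.mem_range.mpr hN)]
      exact tendsto_nhds_unique h1 h2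
    have horthφ : ∀ k : ℕ, (∫ u in Icc a b, gd u * φ k u) = 0 := by
      intro k
      have int1 : IntegrableOn (fun u => K s u * φ k u) (Icc a b) :=
        (hKscont.mul (hφcont k)).integrableOn_Icc
      have int2 : IntegrableOn (fun u => Sf u * φ k u) (Icc a b) := by
        refine integrableOn_of_bdd measurableSet_Icc hIccFin (hSfaesm.mul (hφaesm k))
          (C := M * B k) ?_
        intro u hu
        rw [abs_mul]
        exact mul_le_mul (hSfbd u hu) (hB k u hu) (abs_nonneg _) hM0
      have e : (fun u => gd u * φ k u) = fun u => K s u * φ k u - Sf u * φ k u := by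
        funext u; rw [hgd]; ring
      rw [e, integral_sub int1 int2, heig k s hs, hSφ k, sub_self]
    have hmem : MemLp gd 2 (volume.restrict (Icc a b)) :=
      MemLp.of_bound hgdaesm (M + M)
        (ae_restrict_of_forall_mem measurableSet_Icc (fun u hu => by
          rw [Real.norm_eq_abs]; exact hgdbd u hu))
    have hTzero := hcomplete gd hmem horthφ s hs
    -- the L² norm of the defect vanishes
    have hSgd : (∫ u in Icc a b, Sf u * gd u) = 0 := by
      have h1 := hswap gd (M + M) hgdaesm hgdbd
      have h2 : Tendsto (fun N => ∑ k ∈ Finset.range N,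
          (lam k * φ k s) * (∫ u in Icc a b, φ k u * gd u)) atTop (nhds 0) := by
        refine Tendsto.congr' ?_ (tendsto_const_nhds (x := (0:ℝ)))
        refine Eventually.of_forall (fun N => ?_)
        show (0:ℝ) = ∑ k ∈ Finset.range N,
          (lam k * φ k s) * (∫ u in Icc a b, φ k u * gd u)
        have e0 : ∀ k ∈ Finset.range N,
            (lam k * φ k s) * (∫ u in Icc a b, φ k u * gd u) = 0 := by
          intro k _
          have h00 : (∫ u in Icc a b, φ k u * gd u) = 0 := by
            rw [setIntegral_congr_fun measurableSet_Icc
              (fun u _ => mul_comm (φ k u) (gd u)), horthφ k]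
          rw [h00, mul_zero]
        rw [Finset.sum_congr rfl e0, Finset.sum_const_zero]
      exact tendsto_nhds_unique h1 h2
    have hgd2 : (∫ u in Icc a b, gd u ^ 2) = 0 := by
      have intA : IntegrableOn (fun u => K s u * gd u) (Icc a b) :=
        (hKscont.mul hgdcont).integrableOn_Icc
      have intB : IntegrableOn (fun u => Sf u * gd u) (Icc a b) := by
        refine integrableOn_of_bdd measurableSet_Icc hIccFin (hSfaesm.mul hgdaesm)
          (C := M * (M + M)) ?_
        intro u hu
        rw [abs_mul]
        exact mul_le_mul (hSfbd u hu) (hgdbd u hu) (abs_nonneg _) hM0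
      have e : (fun u => gd u ^ 2) = fun u => K s u * gd u - Sf u * gd u := by
        funext u; rw [hgd]; ring
      rw [e, integral_sub intA intB, hTzero, hSgd, sub_self]
    have hgdint : Integrable (fun u => gd u ^ 2) (volume.restrict (Icc a b)) :=
      (hgdcont.pow 2).integrableOn_Icc
    have hae : (fun u => gd u ^ 2) =ᶠ[ae (volume.restrict (Icc a b))] 0 :=
      (integral_eq_zero_iff_of_nonneg (fun u => sq_nonneg _) hgdint).mp hgd2
    have hae2 : gd =ᶠ[ae (volume.restrict (Icc a b))] (fun _ => 0) := by
      filter_upwards [hae] with u hu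
      exact (pow_eq_zero_iff (two_ne_zero)).mp hu
    have heqz : EqOn gd (fun _ => 0) (Icc a b) :=
      Measure.eqOn_Icc_of_ae_eq volume hab'.ne hae2 hgdcont continuousOn_const
    intro t ht
    have h6 : gd t = 0 := heqz ht
    have h7 : K s t - Sf t = 0 := h6
    have h8 : Sf t = ∑' k, lam k * φ k s * φ k t := rfl
    linarith [h7, h8.ge, h8.le]
  constructor
  · intro s hs t ht
    refine ⟨hsumAbs s hs t ht, ?_⟩
    rw [hKS s hs t ht]
    exact (hsum s hs t ht).hasSum
  · -- uniform convergence via Dini on the diagonal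
    have hdiagconv : ∀ u ∈ Icc a b, Tendsto
        (fun N => ∑ k ∈ Finset.range N, lam k * (φ k u)^2) atTop (nhds (K u u)) := by
      intro u hu
      have h1 := (hQsummable u hu).hasSum.tendsto_sum_nat
      have h2 : (∑' k, lam k * (φ k u)^2) = K u u := by
        rw [hKS u hu u hu]
        exact tsum_congr (fun k => by ring)
      rwa [h2] at h1
    have hdiagcont : ContinuousOn (fun u => K u u) (Icc a b) :=
      hKcont.comp (continuous_id.prodMk continuous_id).continuousOn (fun u hu => ⟨hu, hu⟩)
    have hDini : ∀ ε > 0, ∃ N₀ : ℕ, ∀ N ≥ N₀, ∀ u ∈ Icc a b,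
        K u u - ∑ k ∈ Finset.range N, lam k * (φ k u)^2 < ε := by
      intro ε hε
      have hopen : ∀ N : ℕ, ∃ V : Set ℝ, IsOpen V ∧
          ((fun u => K u u - ∑ k ∈ Finset.range N, lam k * (φ k u)^2) ⁻¹' (Iio ε))
            ∩ Icc a b = V ∩ Icc a b := by
        intro N
        have hc : ContinuousOn
            (fun u => K u u - ∑ k ∈ Finset.range N, lam k * (φ k u)^2) (Icc a b) :=
          hdiagcont.sub (continuousOn_finset_sum _
            (fun k _ => continuousOn_const.mul ((hφcont k).pow 2)))
        rw [continuousOn_iff'] at hc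
        exact hc (Iio ε) isOpen_Iio
      choose V hVopen hVeq using hopen
      have hcover : Icc a b ⊆ ⋃ N, V N := by
        intro u hu
        have h1 : Tendsto (fun N => K u u - ∑ k ∈ Finset.range N, lam k * (φ k u)^2)
            atTop (nhds 0) := by
          have := (tendsto_const_nhds (x := K u u) (f := atTop (α := ℕ))).sub (hdiagconv u hu)
          simpa using this
        obtain ⟨N, hN⟩ := (h1.eventually_lt_const hε).exists
        have hm : u ∈ V N ∩ Icc a b := by
          rw [← hVeq N]
          exact ⟨hN, hu⟩
        exact mem_iUnion.mpr ⟨N, hm.1⟩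
      obtain ⟨F, hF⟩ := isCompact_Icc.elim_finite_subcover V hVopen hcover
      refine ⟨F.sup id, ?_⟩
      intro N hN u hu
      obtain ⟨i, hiF, hui⟩ := mem_iUnion₂.mp (hF hu)
      have h1 : K u u - ∑ k ∈ Finset.range i, lam k * (φ k u)^2 < ε := by
        have hm : u ∈ ((fun u => K u u - ∑ k ∈ Finset.range i, lam k * (φ k u)^2)
            ⁻¹' (Iio ε)) ∩ Icc a b := by
          rw [hVeq i]
          exact ⟨hui, hu⟩
        exact hm.1
      have hiN : i ≤ N := le_trans (Finset.le_sup (f := id) hiF) hN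
      have h2 : (∑ k ∈ Finset.range i, lam k * (φ k u)^2)
          ≤ ∑ k ∈ Finset.range N, lam k * (φ k u)^2 :=
        Finset.sum_le_sum_of_subset_of_nonneg
          (Finset.range_subset_range.mpr hiN)
          (fun k _ _ => mul_nonneg (hpos k).le (sq_nonneg _))
      linarith
    rw [Metric.tendstoUniformlyOn_iff]
    intro ε hε
    have hε' : 0 < ε^2/(M+1) := by positivity
    obtain ⟨N₀, hN₀⟩ := hDini (ε^2/(M+1)) hε'
    filter_upwards [eventually_ge_atTop N₀] with N hN
    rintro ⟨s, t⟩ ⟨hs, ht⟩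
    rw [Real.dist_eq]
    have h1 := htail s hs t ht N
    rw [← hKS s hs t ht] at h1
    set T := (∑' k, lam k * (φ k s)^2) - ∑ k ∈ Finset.range N, lam k * (φ k s)^2 with hT
    have hT0 : 0 ≤ T := by
      rw [hT]
      have := Summable.sum_le_tsum (Finset.range N)
        (fun k _ => mul_nonneg (hpos k).le (sq_nonneg _)) (hQsummable s hs)
      linarith
    have hTlt : T < ε^2/(M+1) := by
      have h2 := hN₀ N hN s hs
      have h3 := hQleK s hs
      rw [hT]
      linarith
    calc |K s t - ∑ k ∈ Finset.range N, lam k * φ k s * φ k t|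
        ≤ Real.sqrt T * Real.sqrt M := h1
      _ = Real.sqrt (T * M) := (Real.sqrt_mul hT0 M).symm
      _ < ε := by
          rw [Real.sqrt_lt' hε]
          have h9 : T * (M + 1) < ε ^ 2 := by
            have := (lt_div_iff₀ (show (0:ℝ) < M + 1 by linarith)).mp hTlt
            linarith
          nlinarith
end

section
/- Let X : J × Ω → ℝ be jointly measurable with X ∈ L²(J × Ω, m × P), E(X_t) = 0, and covariance kernel K(s,t) = E(X_s X_t) continuous with Mercer data (λ_k, φ_k), λ_k > 0. Define Z_k(ω) = λ_k^{-1/2} ∫_J φ_k(t) X(t,ω) dt. Then E(Z_j Z_k) = δ_{jk} and E(Z_k) = 0. -/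
open MeasureTheory ENNReal

lemma smul_prod_aux {α β : Type*} [MeasurableSpace α] [MeasurableSpace β]
    (c : ℝ≥0∞) (hc : c ≠ ⊤) (μ : Measure α) (ν : Measure β)
    [IsFiniteMeasure μ] [SigmaFinite ν] :
    (c • μ).prod ν = c • (μ.prod ν) := by
  haveI : IsFiniteMeasure (c • μ) := by
    constructor
    simp only [Measure.smul_apply, smul_eq_mul]
    exact ENNReal.mul_lt_top hc.lt_top (measure_lt_top μ _)
  refine Measure.prod_eq (μ := c • μ) (ν := ν) (μν := c • (μ.prod ν)) fun s t hs ht => ?_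
  simp [Measure.prod_prod, mul_assoc]

/-- Karhunen–Loève coefficients: if `X ∈ L²(J × Ω)` is jointly measurable with
mean zero and continuous covariance kernel `K(s,t) = E(X_s X_t)` having Mercer
data `(λ_k, φ_k)` with `λ_k > 0`, then the random variables
`Z_k = λ_k^{-1/2} ∫_J φ_k(t) X_t dt` satisfy `E(Z_j Z_k) = δ_{jk}` and
`E(Z_k) = 0`. -/
theorem KL_coefficients_orthonormal
    {Ω : Type*} [MeasureSpace Ω] (P : Measure Ω) [IsProbabilityMeasure P]
    (a b : ℝ) (hab : a ≤ b)
    (X : ℝ → Ω → ℝ)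
    (hXmeas : Measurable (fun p : ℝ × Ω => X p.1 p.2))
    (hXL2 : MemLp (fun p : ℝ × Ω => X p.1 p.2) 2
      ((volume.restrict (Set.Icc a b)).prod P))
    (hXmean : ∀ t ∈ Set.Icc a b, (∫ ω, X t ω ∂P) = 0)
    (K : ℝ → ℝ → ℝ) (hK : ∀ s t, K s t = ∫ ω, X s ω * X t ω ∂P)
    (hKcont : ContinuousOn (fun p : ℝ × ℝ => K p.1 p.2)
      (Set.Icc a b ×ˢ Set.Icc a b))
    (lam : ℕ → ℝ) (hpos : ∀ k, 0 < lam k)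
    (φ : ℕ → ℝ → ℝ) (hφcont : ∀ k, ContinuousOn (φ k) (Set.Icc a b))
    (hon : ∀ j k, (∫ t in Set.Icc a b, φ j t * φ k t) = if j = k then 1 else 0)
    (heig : ∀ k, ∀ t ∈ Set.Icc a b,
      (∫ s in Set.Icc a b, K t s * φ k s) = lam k * φ k t)
    (Z : ℕ → Ω → ℝ)
    (hZ : ∀ k ω, Z k ω = (Real.sqrt (lam k))⁻¹ * ∫ t in Set.Icc a b, φ k t * X t ω) :
    (∀ j k, (∫ ω, Z j ω * Z k ω ∂P) = if j = k then 1 else 0) ∧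
    (∀ k, (∫ ω, Z k ω ∂P) = 0) := by
  have hJc : IsCompact (Set.Icc a b) := isCompact_Icc
  have hμfin : IsFiniteMeasure (volume.restrict (Set.Icc a b)) := by
    constructor
    rw [Measure.restrict_apply_univ]
    simp [Real.volume_Icc]
  have hae : ∀ᵐ t ∂(volume.restrict (Set.Icc a b)), t ∈ Set.Icc a b :=
    ae_restrict_mem measurableSet_Icc
  -- bounds on the eigenfunctions
  have hbdd : ∀ k, ∃ C, 0 ≤ C ∧ ∀ t ∈ Set.Icc a b, ‖φ k t‖ ≤ C := by
    intro k
    obtain ⟨C, hC⟩ := hJc.exists_bound_of_continuousOn (hφcont k)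
    exact ⟨C, le_trans (norm_nonneg _) (hC a (Set.left_mem_Icc.2 hab)), hC⟩
  have hXint : Integrable (fun p : ℝ × Ω => X p.1 p.2)
      ((volume.restrict (Set.Icc a b)).prod P) := hXL2.integrable one_le_two
  have hint1 : ∀ k, Integrable (fun p : ℝ × Ω => φ k p.1 * X p.1 p.2)
      ((volume.restrict (Set.Icc a b)).prod P) := by
    intro k
    obtain ⟨C, hC0, hC⟩ := hbdd k
    have hmeas : AEStronglyMeasurable (fun p : ℝ × Ω => φ k p.1 * X p.1 p.2)
        ((volume.restrict (Set.Icc a b)).prod P) :=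
      (((hφcont k).aestronglyMeasurable measurableSet_Icc).comp_quasiMeasurePreserving
        Measure.quasiMeasurePreserving_fst).mul hXmeas.aestronglyMeasurable
    have h1 : ∀ᵐ p ∂((volume.restrict (Set.Icc a b)).prod P), p.1 ∈ Set.Icc a b :=
      Measure.quasiMeasurePreserving_fst.ae hae
    refine (hXint.norm.const_mul C).mono hmeas ?_
    filter_upwards [h1] with p hp
    rw [norm_mul, Real.norm_eq_abs (C * _), abs_of_nonneg (by positivity)]
    exact mul_le_mul_of_nonneg_right (hC _ hp) (norm_nonneg _)
  -- mean zero
  have hmean : ∀ k, (∫ ω, Z k ω ∂P) = 0 := by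
    intro k
    simp only [hZ]
    rw [integral_const_mul]
    have hswap := integral_integral_swap
      (f := fun (t : ℝ) (ω : Ω) => φ k t * X t ω)
      (μ := volume.restrict (Set.Icc a b)) (ν := P) (hint1 k)
    rw [← hswap]
    have : (∫ t in Set.Icc a b, (∫ ω, φ k t * X t ω ∂P)) = ∫ t in Set.Icc a b, (0:ℝ) := by
      refine setIntegral_congr_fun measurableSet_Icc (fun t ht => ?_)
      rw [integral_const_mul, hXmean t ht, mul_zero]
    rw [this, integral_zero, mul_zero]
  refine ⟨?_, hmean⟩
  intro j k
  obtain ⟨Cj, hCj0, hCj⟩ := hbdd j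
  obtain ⟨Ck, hCk0, hCk⟩ := hbdd k
  -- the big product function
  set G : (ℝ × ℝ) × Ω → ℝ :=
    fun q => (φ j q.1.1 * X q.1.1 q.2) * (φ k q.1.2 * X q.1.2 q.2) with hGdef
  set ρ : Measure ((ℝ × ℝ) × Ω) :=
    ((volume.restrict (Set.Icc a b)).prod (volume.restrict (Set.Icc a b))).prod P with hρdef
  have hμuniv : (volume.restrict (Set.Icc a b)) Set.univ ≠ ⊤ := measure_ne_top _ _
  -- integrability of the squares pulled back
  have hsq : Integrable (fun p : ℝ × Ω => X p.1 p.2 ^ 2)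
      ((volume.restrict (Set.Icc a b)).prod P) := hXL2.integrable_sq
  have hsq1 : Integrable (fun q : (ℝ × ℝ) × Ω => X q.1.1 q.2 ^ 2) ρ := by
    have hm : Measurable (fun q : (ℝ × ℝ) × Ω => (q.1.1, q.2)) :=
      (measurable_fst.comp measurable_fst).prodMk measurable_snd
    have hmap : Measure.map (fun q : (ℝ × ℝ) × Ω => (q.1.1, q.2)) ρ
        = ((volume.restrict (Set.Icc a b)) Set.univ) •
          ((volume.restrict (Set.Icc a b)).prod P) := by
      have h1 := Measure.map_prod_map
        (f := (Prod.fst : ℝ × ℝ → ℝ)) (g := (id : Ω → Ω))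
        ((volume.restrict (Set.Icc a b)).prod (volume.restrict (Set.Icc a b))) P
        measurable_fst measurable_id
      rw [Measure.map_id, Measure.map_fst_prod] at h1
      rw [hρdef, show (fun q : (ℝ × ℝ) × Ω => (q.1.1, q.2)) = Prod.map Prod.fst id from rfl,
        ← h1, smul_prod_aux _ hμuniv]
    have hg : AEStronglyMeasurable (fun p : ℝ × Ω => X p.1 p.2 ^ 2)
        (Measure.map (fun q : (ℝ × ℝ) × Ω => (q.1.1, q.2)) ρ) :=
      ((hXmeas.pow_const 2).aestronglyMeasurable)
    exact (integrable_map_measure hg hm.aemeasurable).mp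
      (by rw [hmap]; exact hsq.smul_measure hμuniv)
  have hsq2 : Integrable (fun q : (ℝ × ℝ) × Ω => X q.1.2 q.2 ^ 2) ρ := by
    have hm : Measurable (fun q : (ℝ × ℝ) × Ω => (q.1.2, q.2)) :=
      (measurable_snd.comp measurable_fst).prodMk measurable_snd
    have hmap : Measure.map (fun q : (ℝ × ℝ) × Ω => (q.1.2, q.2)) ρ
        = ((volume.restrict (Set.Icc a b)) Set.univ) •
          ((volume.restrict (Set.Icc a b)).prod P) := by
      have h1 := Measure.map_prod_map
        (f := (Prod.snd : ℝ × ℝ → ℝ)) (g := (id : Ω → Ω))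
        ((volume.restrict (Set.Icc a b)).prod (volume.restrict (Set.Icc a b))) P
        measurable_snd measurable_id
      rw [Measure.map_id, Measure.map_snd_prod] at h1
      rw [hρdef, show (fun q : (ℝ × ℝ) × Ω => (q.1.2, q.2)) = Prod.map Prod.snd id from rfl,
        ← h1, smul_prod_aux _ hμuniv]
    have hg : AEStronglyMeasurable (fun p : ℝ × Ω => X p.1 p.2 ^ 2)
        (Measure.map (fun q : (ℝ × ℝ) × Ω => (q.1.2, q.2)) ρ) :=
      ((hXmeas.pow_const 2).aestronglyMeasurable)
    exact (integrable_map_measure hg hm.aemeasurable).mp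
      (by rw [hmap]; exact hsq.smul_measure hμuniv)
  -- a.e. membership
  have hmem : ∀ᵐ q ∂ρ, q.1.1 ∈ Set.Icc a b ∧ q.1.2 ∈ Set.Icc a b := by
    have h1 : ∀ᵐ st ∂((volume.restrict (Set.Icc a b)).prod (volume.restrict (Set.Icc a b))),
        st.1 ∈ Set.Icc a b ∧ st.2 ∈ Set.Icc a b :=
      (Measure.quasiMeasurePreserving_fst.ae hae).and
        (Measure.quasiMeasurePreserving_snd.ae hae)
    exact Measure.quasiMeasurePreserving_fst.ae h1
  -- measurability of G
  have hGmeas : AEStronglyMeasurable G ρ := by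
    have qf : Measure.QuasiMeasurePreserving (fun q : (ℝ × ℝ) × Ω => q.1.1) ρ
        (volume.restrict (Set.Icc a b)) :=
      Measure.quasiMeasurePreserving_fst.comp Measure.quasiMeasurePreserving_fst
    have qs : Measure.QuasiMeasurePreserving (fun q : (ℝ × ℝ) × Ω => q.1.2) ρ
        (volume.restrict (Set.Icc a b)) :=
      Measure.quasiMeasurePreserving_snd.comp Measure.quasiMeasurePreserving_fst
    have mX1 : Measurable (fun q : (ℝ × ℝ) × Ω => X q.1.1 q.2) :=
      hXmeas.comp ((measurable_fst.comp measurable_fst).prodMk measurable_snd)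
    have mX2 : Measurable (fun q : (ℝ × ℝ) × Ω => X q.1.2 q.2) :=
      hXmeas.comp ((measurable_snd.comp measurable_fst).prodMk measurable_snd)
    exact ((((hφcont j).aestronglyMeasurable measurableSet_Icc).comp_quasiMeasurePreserving
        qf).mul mX1.aestronglyMeasurable).mul
      ((((hφcont k).aestronglyMeasurable measurableSet_Icc).comp_quasiMeasurePreserving
        qs).mul mX2.aestronglyMeasurable)
  -- G is integrable
  have hG : Integrable G ρ := by
    refine (((hsq1.add hsq2).const_mul (Cj * Ck)).mono' hGmeas ?_)
    filter_upwards [hmem] with q hq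
    have h1 : ‖φ j q.1.1‖ ≤ Cj := hCj _ hq.1
    have h2 : ‖φ k q.1.2‖ ≤ Ck := hCk _ hq.2
    have hxy : ‖X q.1.1 q.2‖ * ‖X q.1.2 q.2‖ ≤ X q.1.1 q.2 ^ 2 + X q.1.2 q.2 ^ 2 := by
      have := sq_nonneg (‖X q.1.1 q.2‖ - ‖X q.1.2 q.2‖)
      have e1 : ‖X q.1.1 q.2‖ ^ 2 = X q.1.1 q.2 ^ 2 := by
        rw [Real.norm_eq_abs, sq_abs]
      have e2 : ‖X q.1.2 q.2‖ ^ 2 = X q.1.2 q.2 ^ 2 := by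
        rw [Real.norm_eq_abs, sq_abs]
      nlinarith [norm_nonneg (X q.1.1 q.2), norm_nonneg (X q.1.2 q.2)]
    calc ‖G q‖ = (‖φ j q.1.1‖ * ‖X q.1.1 q.2‖) * (‖φ k q.1.2‖ * ‖X q.1.2 q.2‖) := by
          simp [hGdef, norm_mul]
      _ ≤ (Cj * ‖X q.1.1 q.2‖) * (Ck * ‖X q.1.2 q.2‖) := by
          apply mul_le_mul
          · exact mul_le_mul_of_nonneg_right h1 (norm_nonneg _)
          · exact mul_le_mul_of_nonneg_right h2 (norm_nonneg _)
          · positivity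
          · positivity
      _ = (Cj * Ck) * (‖X q.1.1 q.2‖ * ‖X q.1.2 q.2‖) := by ring
      _ ≤ (Cj * Ck) * (X q.1.1 q.2 ^ 2 + X q.1.2 q.2 ^ 2) :=
          mul_le_mul_of_nonneg_left hxy (by positivity)
  -- the main computation
  have hYY : (∫ ω, (∫ t in Set.Icc a b, φ j t * X t ω) *
      (∫ t in Set.Icc a b, φ k t * X t ω) ∂P) = lam k * (if j = k then 1 else 0) := by
    have e1 : ∀ ω : Ω, (∫ t in Set.Icc a b, φ j t * X t ω) *
        (∫ t in Set.Icc a b, φ k t * X t ω)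
        = ∫ st, G (st, ω)
            ∂((volume.restrict (Set.Icc a b)).prod (volume.restrict (Set.Icc a b))) :=
      fun ω => (integral_prod_mul (μ := volume.restrict (Set.Icc a b))
        (ν := volume.restrict (Set.Icc a b))
        (fun s => φ j s * X s ω) (fun t => φ k t * X t ω)).symm
    simp only [e1]
    have e2 : (∫ ω, (∫ st, G (st, ω)
          ∂((volume.restrict (Set.Icc a b)).prod (volume.restrict (Set.Icc a b)))) ∂P)
        = ∫ st, (∫ ω, G (st, ω) ∂P)
          ∂((volume.restrict (Set.Icc a b)).prod (volume.restrict (Set.Icc a b))) :=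
      integral_integral_swap (f := fun (ω : Ω) (st : ℝ × ℝ) => G (st, ω)) hG.swap
    rw [e2]
    have e3 : ∀ st : ℝ × ℝ, (∫ ω, G (st, ω) ∂P)
        = (φ j st.1 * φ k st.2) * K st.1 st.2 := by
      intro st
      have h : ∀ ω : Ω, G (st, ω) = (φ j st.1 * φ k st.2) * (X st.1 ω * X st.2 ω) :=
        fun ω => by simp only [hGdef]; ring
      simp only [h]
      rw [integral_const_mul, ← hK]
    simp only [e3]
    have hHint : Integrable (fun st : ℝ × ℝ => (φ j st.1 * φ k st.2) * K st.1 st.2)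
        ((volume.restrict (Set.Icc a b)).prod (volume.restrict (Set.Icc a b))) := by
      have hcont : ContinuousOn (fun st : ℝ × ℝ => (φ j st.1 * φ k st.2) * K st.1 st.2)
          (Set.Icc a b ×ˢ Set.Icc a b) := by
        refine ContinuousOn.mul (ContinuousOn.mul ?_ ?_) hKcont
        · exact (hφcont j).comp continuousOn_fst (fun p hp => hp.1)
        · exact (hφcont k).comp continuousOn_snd (fun p hp => hp.2)
      have h := hcont.integrableOn_compact (μ := volume) (hJc.prod hJc)
      rwa [IntegrableOn, Measure.volume_eq_prod, ← Measure.prod_restrict] at h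
    rw [integral_prod _ hHint]
    have e4 : (∫ s in Set.Icc a b,
        (∫ t in Set.Icc a b, (φ j s * φ k t) * K s t))
        = ∫ s in Set.Icc a b, lam k * (φ j s * φ k s) := by
      refine setIntegral_congr_fun measurableSet_Icc (fun s hs => ?_)
      rw [show (fun t => (φ j s * φ k t) * K s t)
          = (fun t => φ j s * (K s t * φ k t)) from funext fun t => by ring,
        integral_const_mul, heig k s hs]
      ring
    rw [e4, integral_const_mul, hon j k]
  -- assemble
  have hc : ∀ ω : Ω, Z j ω * Z k ω
      = ((Real.sqrt (lam j))⁻¹ * (Real.sqrt (lam k))⁻¹) *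
        ((∫ t in Set.Icc a b, φ j t * X t ω) * (∫ t in Set.Icc a b, φ k t * X t ω)) :=
    fun ω => by rw [hZ j, hZ k]; ring
  simp only [hc]
  rw [integral_const_mul, hYY]
  by_cases hjk : j = k
  · subst hjk
    rw [if_pos rfl, mul_one]
    have h0 : Real.sqrt (lam j) ≠ 0 := by
      rw [Real.sqrt_ne_zero' ]
      exact hpos j
    rw [show lam j = Real.sqrt (lam j) * Real.sqrt (lam j) from
      (Real.mul_self_sqrt (hpos j).le).symm]
    field_simp
    rw [Real.sqrt_sq (Real.sqrt_nonneg _)]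
  · simp [hjk]
end
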